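/- Let φ(P,m) and φ(Q,n) be Γ-Whitehead automorphisms with associated ΓW-partitions 𝒫 = {P | P* | lk(m)^±} based at m and 𝒬 = {Q | Q* | lk(n)^±} based at n. If the generators m and n commute in A_Γ (i.e. their underlying vertices are equal or adjacent), then φ(P,m) and φ(Q,n) commute as automorphisms. If m and n do not commute, then the images of φ(P,m) and φ(Q,n) in Out(A_Γ) commute if and only if 𝒫 and 𝒬 are compatible, 𝒬 does not split the underlying vertex of m, and 𝒫 does not split the underlying vertex of n. -/

import Mathlib

namespace GW

variable {V : Type*}

/-- `V^±`: the set of generators and their inverses, identified with `V × Bool`;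
`(v, true)` is the generator `v` and `(v, false)` is `v⁻¹`. -/
abbrev Vpm (V : Type*) := V × Bool

/-- The inverse of an element of `V^±`. -/
def pinv (x : Vpm V) : Vpm V := (x.1, !x.2)

/-- The link of a vertex: the set of vertices adjacent to it. -/
def lk (Γ : SimpleGraph V) (v : V) : Set V := {w | Γ.Adj v w}

/-- The star of a vertex: its link together with the vertex itself. -/
def st (Γ : SimpleGraph V) (v : V) : Set V := lk Γ v ∪ {v}

/-- A vertex is principal if no vertex has strictly larger link. -/
def Principal (Γ : SimpleGraph V) (v : V) : Prop := ¬ ∃ w : V, lk Γ v ⊂ lk Γ w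

/-- The relation `u ∼ w`: `lk(u) ⊆ st(w)` and `lk(w) ⊆ st(u)`. -/
def Eqv (Γ : SimpleGraph V) (u w : V) : Prop :=
  lk Γ u ⊆ st Γ w ∧ lk Γ w ⊆ st Γ u

/-- For `S ⊆ V`, the set `S^± ⊆ V^±` of elements with underlying vertex in `S`. -/
def pm (S : Set V) : Set (Vpm V) := {x | x.1 ∈ S}

/-- `u` and `w` lie in the same connected component of `Γ − lk(m)`
(the induced subgraph on the complement of the link of `m`). -/
def SameComp (Γ : SimpleGraph V) (m u w : V) : Prop :=
  ∃ (hu : u ∈ (lk Γ m)ᶜ) (hw : w ∈ (lk Γ m)ᶜ),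
    (Γ.induce ((lk Γ m)ᶜ : Set V)).Reachable ⟨u, hu⟩ ⟨w, hw⟩

/-- The vertex set of the connected component of `u` in `Γ − lk(m)`. -/
def comp (Γ : SimpleGraph V) (m u : V) : Set V := {w | SameComp Γ m u w}

/-- `U ⊆ V^±` is `m`-inseparable if `U = {u}` or `U = {u⁻¹}` for a vertex `u` whose
component in `Γ − lk(m)` is the single vertex `u`, or `U = C^±` for a component `C`
of `Γ − lk(m)` with more than one vertex. -/
def Inseparable (Γ : SimpleGraph V) (m : Vpm V) (U : Set (Vpm V)) : Prop :=
  (∃ u : V, comp Γ m.1 u = {u} ∧ (U = {(u, true)} ∨ U = {(u, false)})) ∨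
  (∃ u : V, u ∈ (lk Γ m.1)ᶜ ∧ comp Γ m.1 u ≠ {u} ∧ U = pm (comp Γ m.1 u))

/-- A `ΓW`-subset based at `m`: a union of `m`-inseparable subsets containing `m`
but not `m⁻¹`. -/
def GWSubset (Γ : SimpleGraph V) (m : Vpm V) (P : Set (Vpm V)) : Prop :=
  m ∈ P ∧ pinv m ∉ P ∧ ∀ x ∈ P, ∃ U : Set (Vpm V), Inseparable Γ m U ∧ x ∈ U ∧ U ⊆ P

/-- `P* = V^± ∖ lk(m)^± ∖ P`. -/
def pstar (Γ : SimpleGraph V) (m : Vpm V) (P : Set (Vpm V)) : Set (Vpm V) :=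
  (pm (lk Γ m.1))ᶜ \ P

/-- A `ΓW`-partition `{P | P* | lk(m)^±}` based at `m`, recorded together with its
base `m` and the side `P` containing `m`; both sides are `ΓW`-subsets with at least
two elements. -/
structure GWPartition (Γ : SimpleGraph V) where
  base : Vpm V
  P : Set (Vpm V)
  hP : GWSubset Γ base P
  hPstar : GWSubset Γ (pinv base) (pstar Γ base P)
  thickP : 2 ≤ P.ncard
  thickPstar : 2 ≤ (pstar Γ base P).ncard

/-- The side `P*` of a `ΓW`-partition. -/
def GWPartition.Pstar {Γ : SimpleGraph V} (Pa : GWPartition Γ) : Set (Vpm V) :=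
  pstar Γ Pa.base Pa.P

/-- The (unordered) pair of sides of a `ΓW`-partition; two `ΓW`-partitions are equal
as partitions exactly when they have the same sides. -/
def sidesOf {Γ : SimpleGraph V} (Pa : GWPartition Γ) : Set (Set (Vpm V)) :=
  {Pa.P, Pa.Pstar}

/-- A `ΓW`-partition splits a vertex `v` if `v` and `v⁻¹` lie in different sides. -/
def Splits {Γ : SimpleGraph V} (Pa : GWPartition Γ) (v : V) : Prop :=
  ((v, true) ∈ Pa.P ∧ (v, false) ∈ Pa.Pstar) ∨
  ((v, false) ∈ Pa.P ∧ (v, true) ∈ Pa.Pstar)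

/-- Compatibility of `ΓW`-partitions: some pair of sides is disjoint, or the
underlying vertices of the bases are adjacent with different stars. -/
def Compatible {Γ : SimpleGraph V} (Pa Qa : GWPartition Γ) : Prop :=
  (Pa.P ∩ Qa.P = ∅ ∨ Pa.P ∩ Qa.Pstar = ∅ ∨ Pa.Pstar ∩ Qa.P = ∅ ∨ Pa.Pstar ∩ Qa.Pstar = ∅) ∨
  (Γ.Adj Pa.base.1 Qa.base.1 ∧ st Γ Pa.base.1 ≠ st Γ Qa.base.1)

/-- Weak compatibility: some pair of sides is disjoint, or the underlying vertices of
the bases are adjacent (hence distinct). -/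
def WeakCompatible {Γ : SimpleGraph V} (Pa Qa : GWPartition Γ) : Prop :=
  (Pa.P ∩ Qa.P = ∅ ∨ Pa.P ∩ Qa.Pstar = ∅ ∨ Pa.Pstar ∩ Qa.P = ∅ ∨ Pa.Pstar ∩ Qa.Pstar = ∅) ∨
  Γ.Adj Pa.base.1 Qa.base.1

/-- A `ΓW`-partition is based at the vertex `u` if it is based at `u` or `u⁻¹`, i.e.
`lk(u)` equals the link of the recorded base and the partition separates `u` from
`u⁻¹`. -/
def BasedAtVtx {Γ : SimpleGraph V} (Pa : GWPartition Γ) (u : V) : Prop :=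
  lk Γ u = lk Γ Pa.base.1 ∧ Splits Pa u

/-- `M(U)`: the largest size of a collection of pairwise distinct, pairwise compatible
`ΓW`-partitions, each based at some element of `U`. -/
noncomputable def M (Γ : SimpleGraph V) (U : Set V) : ℕ :=
  sSup {k : ℕ | ∃ C : Finset (GWPartition Γ), C.card = k ∧
    (∀ Pa ∈ C, Pa.base.1 ∈ U) ∧
    (∀ Pa ∈ C, ∀ Qa ∈ C, Pa ≠ Qa → sidesOf Pa ≠ sidesOf Qa ∧ Compatible Pa Qa)}

/-- `μ(U)`: the largest size of a collection of pairwise distinct, pairwise weakly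
compatible `ΓW`-partitions, each based at some element of `U`. -/
noncomputable def Mweak (Γ : SimpleGraph V) (U : Set V) : ℕ :=
  sSup {k : ℕ | ∃ C : Finset (GWPartition Γ), C.card = k ∧
    (∀ Pa ∈ C, Pa.base.1 ∈ U) ∧
    (∀ Pa ∈ C, ∀ Qa ∈ C, Pa ≠ Qa → sidesOf Pa ≠ sidesOf Qa ∧ WeakCompatible Pa Qa)}

/-- The commutation relations defining the right-angled Artin group `A_Γ`. -/
def Rels (Γ : SimpleGraph V) : Set (FreeGroup V) :=
  {r | ∃ u w : V, Γ.Adj u w ∧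
    r = FreeGroup.of u * FreeGroup.of w * (FreeGroup.of u)⁻¹ * (FreeGroup.of w)⁻¹}

/-- The right-angled Artin group `A_Γ`. -/
abbrev RAAG (Γ : SimpleGraph V) := PresentedGroup (Rels Γ)

/-- The generator of `A_Γ` corresponding to a vertex. -/
def ofv (Γ : SimpleGraph V) (v : V) : RAAG Γ := PresentedGroup.of v

/-- The element of `A_Γ` corresponding to an element of `V^±`. -/
def gen (Γ : SimpleGraph V) (x : Vpm V) : RAAG Γ :=
  if x.2 then ofv Γ x.1 else (ofv Γ x.1)⁻¹

open scoped Classical in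
/-- The image of the generator `v` under the Whitehead automorphism `φ(P, m)`. -/
noncomputable def whImage (Γ : SimpleGraph V) (P : Set (Vpm V)) (m : Vpm V) (v : V) :
    RAAG Γ :=
  if (v, true) ∈ P ∧ (v, false) ∈ P then gen Γ m * ofv Γ v * (gen Γ m)⁻¹
  else if v ≠ m.1 ∧ (v, true) ∈ P ∧ (v, false) ∈ pstar Γ m P then ofv Γ v * (gen Γ m)⁻¹
  else if v ≠ m.1 ∧ (v, false) ∈ P ∧ (v, true) ∈ pstar Γ m P then gen Γ m * ofv Γ v
  else ofv Γ v

/-- `φ` is the Whitehead automorphism `φ(P, m)`: it sends each generator `v` to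
`mvm⁻¹` if `v, v⁻¹ ∈ P`; to `vm⁻¹` if `v ∈ P`, `v⁻¹ ∈ P*`, `v ≠ m^{±1}`; to `mv` if
`v⁻¹ ∈ P`, `v ∈ P*`, `v ≠ m^{±1}`; and to `v` otherwise. -/
def IsWhitehead (Γ : SimpleGraph V) (P : Set (Vpm V)) (m : Vpm V)
    (φ : MulAut (RAAG Γ)) : Prop :=
  ∀ v : V, φ (ofv Γ v) = whImage Γ P m v

/-- An automorphism is inner if it is conjugation by some group element. -/
def IsInner {G : Type*} [Group G] (φ : MulAut G) : Prop :=
  ∃ g : G, ∀ x, φ x = g * x * g⁻¹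

/-- Two automorphisms commute as outer automorphisms iff their commutator is inner. -/
def CommuteOuter {G : Type*} [Group G] (φ ψ : MulAut G) : Prop :=
  IsInner (φ * ψ * φ⁻¹ * ψ⁻¹)

/-- The subgroup of inner automorphisms. -/
def Inn (G : Type*) [Group G] : Subgroup (MulAut G) := (MulAut.conj : G →* MulAut G).range

instance innNormal (G : Type*) [Group G] : (Inn G).Normal := by
  constructor
  intro n hn φ
  obtain ⟨g, rfl⟩ := hn
  refine ⟨φ g, ?_⟩
  ext x
  simp [MulAut.conj, mul_assoc]

/-- The outer automorphism group `Out(G) = Aut(G)/Inn(G)`. -/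
abbrev Out (G : Type*) [Group G] := MulAut G ⧸ Inn G

/-- The projection `Aut(G) → Out(G)`. -/
def toOut (G : Type*) [Group G] : MulAut G →* Out G := QuotientGroup.mk' (Inn G)


-- ### structural lemmas

theorem mem_comp_not_lk {Γ : SimpleGraph V} {m u w : V} (h : w ∈ comp Γ m u) :
    w ∉ lk Γ m := by
  obtain ⟨hu, hw, -⟩ := h; exact hw

theorem mem_comp_self {Γ : SimpleGraph V} {m u : V} (h : u ∉ lk Γ m) :
    u ∈ comp Γ m u := ⟨h, h, SimpleGraph.Reachable.refl _⟩

theorem sameComp_adj {Γ : SimpleGraph V} {m u w : V} (hu : u ∉ lk Γ m) (hw : w ∉ lk Γ m)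
    (hadj : Γ.Adj u w) : SameComp Γ m u w := by
  refine ⟨hu, hw, SimpleGraph.Adj.reachable ?_⟩
  simpa [SimpleGraph.comap_adj] using hadj

theorem comp_trans {Γ : SimpleGraph V} {m u w x : V} (h1 : w ∈ comp Γ m u)
    (h2 : x ∈ comp Γ m w) : x ∈ comp Γ m u := by
  obtain ⟨hu, hw, r1⟩ := h1
  obtain ⟨hw', hx, r2⟩ := h2
  exact ⟨hu, hx, r1.trans r2⟩

/-- Elements of a `GWSubset` have vertices outside the link of the base. -/
theorem GWSubset.not_lk {Γ : SimpleGraph V} {b : Vpm V} {T : Set (Vpm V)}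
    (hT : GWSubset Γ b T) {x : Vpm V} (hx : x ∈ T) : x.1 ∉ lk Γ b.1 := by
  obtain ⟨-, -, hU⟩ := hT
  obtain ⟨U, hins, hxU, -⟩ := hU x hx
  rcases hins with ⟨u, hcomp, hU1 | hU1⟩ | ⟨u, hu, -, hU2⟩
  · subst hU1; simp only [Set.mem_singleton_iff] at hxU; subst hxU
    exact mem_comp_not_lk (hcomp ▸ (Set.mem_singleton u))
  · subst hU1; simp only [Set.mem_singleton_iff] at hxU; subst hxU
    exact mem_comp_not_lk (hcomp ▸ (Set.mem_singleton u))
  · subst hU2; exact mem_comp_not_lk hxU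

/-- If `x` lies in a `GWSubset` `T` and `w` is adjacent to `x.1` with `w` outside the
link of the base, then both signs of `w` lie in `T`. -/
theorem GWSubset.adj_mem {Γ : SimpleGraph V} {b : Vpm V} {T : Set (Vpm V)}
    (hT : GWSubset Γ b T) {x : Vpm V} (hx : x ∈ T) {w : V}
    (hadj : Γ.Adj x.1 w) (hw : w ∉ lk Γ b.1) : (w, true) ∈ T ∧ (w, false) ∈ T := by
  have hxl : x.1 ∉ lk Γ b.1 := hT.not_lk hx
  obtain ⟨-, -, hU⟩ := hT
  obtain ⟨U, hins, hxU, hUT⟩ := hU x hx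
  have hsc : SameComp Γ b.1 x.1 w := sameComp_adj hxl hw hadj
  rcases hins with ⟨u, hcomp, hU1 | hU1⟩ | ⟨u, hu, hne, hU2⟩
  · subst hU1; simp only [Set.mem_singleton_iff] at hxU
    subst hxU
    have hwu : w ∈ comp Γ b.1 u := hsc
    rw [hcomp, Set.mem_singleton_iff] at hwu
    subst hwu
    exact absurd hadj (Γ.irrefl)
  · subst hU1; simp only [Set.mem_singleton_iff] at hxU
    subst hxU
    have hwu : w ∈ comp Γ b.1 u := hsc
    rw [hcomp, Set.mem_singleton_iff] at hwu
    subst hwu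
    exact absurd hadj (Γ.irrefl)
  · subst hU2
    have hxc : x.1 ∈ comp Γ b.1 u := hxU
    have hwc : w ∈ comp Γ b.1 u := comp_trans hxc hsc
    exact ⟨hUT hwc, hUT hwc⟩


section RAAGLemmas

variable {Γ : SimpleGraph V}

theorem ofv_commute_of_adj {u w : V} (h : Γ.Adj u w) :
    Commute (ofv Γ u) (ofv Γ w) := by
  set r := FreeGroup.of u * FreeGroup.of w * (FreeGroup.of u)⁻¹ * (FreeGroup.of w)⁻¹ with hr
  have hmem : r ∈ Rels Γ := ⟨u, w, h, rfl⟩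
  have h1 : (PresentedGroup.mk (Rels Γ)) r = 1 :=
    (QuotientGroup.eq_one_iff r).mpr (Subgroup.subset_normalClosure hmem)
  rw [hr] at h1
  simp only [map_mul, map_inv] at h1
  have h2 : ofv Γ u * ofv Γ w * (ofv Γ u)⁻¹ * (ofv Γ w)⁻¹ = 1 := h1
  exact commutatorElement_eq_one_iff_commute.mp h2

theorem gen_commute {x y : Vpm V} (h : x.1 = y.1 ∨ Γ.Adj x.1 y.1) :
    Commute (gen Γ x) (gen Γ y) := by
  have hc : Commute (ofv Γ x.1) (ofv Γ y.1) := by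
    rcases h with h | h
    · rw [h]
    · exact ofv_commute_of_adj h
  obtain ⟨v, b⟩ := x; obtain ⟨w, c⟩ := y
  cases b <;> cases c <;> simp only [gen, if_true, if_false, Bool.false_eq_true] <;>
    first
      | exact hc
      | exact hc.inv_left
      | exact hc.inv_right
      | exact hc.inv_left.inv_right

theorem ofv_commute_of_lk {u w : V} (h : u ∈ lk Γ w) :
    Commute (ofv Γ u) (ofv Γ w) := (ofv_commute_of_adj h).symm

theorem hom_ext {H : Type*} [Group H] {F G : RAAG Γ →* H}
    (h : ∀ v, F (ofv Γ v) = G (ofv Γ v)) : F = G := PresentedGroup.ext h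

theorem aut_ext {φ ψ : MulAut (RAAG Γ)} (h : ∀ v, φ (ofv Γ v) = ψ (ofv Γ v)) : φ = ψ :=
  MulEquiv.toMonoidHom_injective (hom_ext h)

/-- Lift a vertex-assignment respecting adjacency-commutation to a homomorphism on the RAAG. -/
noncomputable def raagLift {H : Type*} [Group H] (f : V → H)
    (hf : ∀ u w, Γ.Adj u w → Commute (f u) (f w)) : RAAG Γ →* H :=
  PresentedGroup.toGroup (f := f) (by
    rintro r ⟨u, w, hadj, rfl⟩
    simp only [map_mul, map_inv, FreeGroup.lift_apply_of]
    exact commutatorElement_eq_one_iff_commute.mpr (hf u w hadj))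

@[simp] theorem raagLift_ofv {H : Type*} [Group H] (f : V → H)
    (hf : ∀ u w, Γ.Adj u w → Commute (f u) (f w)) (v : V) :
    raagLift f hf (ofv Γ v) = f v := PresentedGroup.toGroup.of _

@[simp] theorem gen_true (v : V) : gen Γ (v, true) = ofv Γ v := rfl

@[simp] theorem gen_false (v : V) : gen Γ (v, false) = (ofv Γ v)⁻¹ := rfl

theorem gen_pinv (x : Vpm V) : gen Γ (pinv x) = (gen Γ x)⁻¹ := by
  obtain ⟨v, b⟩ := x; cases b <;> simp [gen, pinv]

theorem mem_pstar_iff {m : Vpm V} {P : Set (Vpm V)} {x : Vpm V} :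
    x ∈ pstar Γ m P ↔ x.1 ∉ lk Γ m.1 ∧ x ∉ P := by
  simp [pstar, pm, Set.mem_diff]

end RAAGLemmas

section Whitehead
open scoped Classical

variable {Γ : SimpleGraph V} {m : Vpm V} {P : Set (Vpm V)} {φ : MulAut (RAAG Γ)}

theorem base_not_lk_self (Γ : SimpleGraph V) (m : Vpm V) : m.1 ∉ lk Γ m.1 := by
  simp [lk]

/-- Uniform signed form of the Whitehead automorphism action on `gen x`. -/
theorem wh_gen (hP : GWSubset Γ m P) (hφ : IsWhitehead Γ P m φ) (x : Vpm V) :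
    φ (gen Γ x) = (if pinv x ∈ P ∧ x.1 ≠ m.1 then gen Γ m else 1) * gen Γ x *
      (if x ∈ P ∧ x.1 ≠ m.1 then (gen Γ m)⁻¹ else 1) := by
  classical
  have hofv : φ (ofv Γ m.1) = ofv Γ m.1 := by
    rw [hφ m.1]
    have hnb : ¬((m.1, true) ∈ P ∧ (m.1, false) ∈ P) := by
      obtain ⟨mv, mb⟩ := m
      cases mb
      · exact fun h => hP.2.1 (by simpa [pinv] using h.1)
      · exact fun h => hP.2.1 (by simpa [pinv] using h.2)
    unfold whImage
    rw [if_neg hnb, if_neg (by simp), if_neg (by simp)]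
  obtain ⟨v, b⟩ := x
  by_cases h3 : v = m.1
  · subst h3
    cases b
    · simp only [gen_false, map_inv, hofv, pinv]
      simp
    · simp only [gen_true, hofv]
      simp
  · have key : φ (ofv Γ v) = (if (v, false) ∈ P then gen Γ m else 1) * ofv Γ v *
        (if (v, true) ∈ P then (gen Γ m)⁻¹ else 1) := by
      rw [hφ v]
      by_cases h1 : (v, true) ∈ P <;> by_cases h2 : (v, false) ∈ P
      · have : ¬ (v ≠ m.1 ∧ (v, true) ∈ P ∧ (v, false) ∈ pstar Γ m P) := by
          rintro ⟨-, -, hps⟩; exact (mem_pstar_iff.mp hps).2 h2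
        unfold whImage
        rw [if_pos ⟨h1, h2⟩, if_pos h2, if_pos h1]
      · have hl : v ∉ lk Γ m.1 := hP.not_lk h1
        unfold whImage
        rw [if_neg (by tauto), if_pos ⟨h3, h1, mem_pstar_iff.mpr ⟨hl, h2⟩⟩,
          if_neg (by tauto), if_pos h1, one_mul]
      · have hl : v ∉ lk Γ m.1 := hP.not_lk h2
        unfold whImage
        rw [if_neg (by tauto), if_neg (by tauto),
          if_pos ⟨h3, h2, mem_pstar_iff.mpr ⟨hl, h1⟩⟩, if_pos h2, if_neg h1, mul_one]
      · unfold whImage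
        rw [if_neg (by tauto), if_neg (by tauto), if_neg (by tauto),
          if_neg h2, if_neg h1, one_mul, mul_one]
    cases b
    · simp only [gen_false, map_inv, key, pinv, Bool.not_false, mul_inv_rev]
      by_cases h1 : (v, true) ∈ P <;> by_cases h2 : (v, false) ∈ P <;>
        simp [h1, h2, h3, mul_assoc]
    · simp only [gen_true, key, pinv, Bool.not_true]
      by_cases h1 : (v, true) ∈ P <;> by_cases h2 : (v, false) ∈ P <;>
        simp [h1, h2, h3]

theorem wh_gen_base (hP : GWSubset Γ m P) (hφ : IsWhitehead Γ P m φ) :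
    φ (gen Γ m) = gen Γ m := by
  rw [wh_gen hP hφ m]
  simp

theorem wh_ofv_base (hP : GWSubset Γ m P) (hφ : IsWhitehead Γ P m φ) :
    φ (ofv Γ m.1) = ofv Γ m.1 := by
  have := wh_gen hP hφ (m.1, true)
  simpa using this

end Whitehead

section Master

variable {G : Type*} [Group G]

theorem conj_comm_of_eq {φ ψ : MulAut G} {g : G}
    (h : φ * ψ = MulAut.conj g * (ψ * φ)) : IsInner (φ * ψ * φ⁻¹ * ψ⁻¹) := by
  refine ⟨g, fun x => ?_⟩
  have h2 : φ * ψ * φ⁻¹ * ψ⁻¹ = MulAut.conj g := by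
    have : φ * ψ * φ⁻¹ * ψ⁻¹ = (φ * ψ) * (ψ * φ)⁻¹ := by group
    rw [this, h]
    group
  rw [h2]
  simp [MulAut.conj]

theorem isInner_of_comm {φ ψ : MulAut G} (h : φ * ψ = ψ * φ) :
    IsInner (φ * ψ * φ⁻¹ * ψ⁻¹) := by
  apply conj_comm_of_eq (g := 1)
  simpa using h

theorem isInner_swap {φ ψ : MulAut G} (h : IsInner (φ * ψ * φ⁻¹ * ψ⁻¹)) :
    IsInner (ψ * φ * ψ⁻¹ * φ⁻¹) := by
  obtain ⟨g, hg⟩ := h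
  refine ⟨g⁻¹, fun x => ?_⟩
  have hinv : ψ * φ * ψ⁻¹ * φ⁻¹ = (φ * ψ * φ⁻¹ * ψ⁻¹)⁻¹ := by group
  rw [hinv]
  have : (φ * ψ * φ⁻¹ * ψ⁻¹) (g⁻¹ * x * g⁻¹⁻¹) = x := by
    rw [hg]; group
  calc (φ * ψ * φ⁻¹ * ψ⁻¹)⁻¹ x
      = (φ * ψ * φ⁻¹ * ψ⁻¹)⁻¹ ((φ * ψ * φ⁻¹ * ψ⁻¹) (g⁻¹ * x * g⁻¹⁻¹)) := by rw [this]
    _ = g⁻¹ * x * g⁻¹⁻¹ := by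
        rw [show ((φ * ψ * φ⁻¹ * ψ⁻¹)⁻¹ : MulAut G) = (φ * ψ * φ⁻¹ * ψ⁻¹).symm from rfl]
        exact MulEquiv.symm_apply_apply _ _

def Dw (M N : G) (r s : ℤ) : G := M ^ r * N * M ^ s

def Fw (M N : G) (r s p q : ℤ) : G := (Dw M N r s) ^ p * M * (Dw M N r s) ^ q

def Ew (M N : G) (r s p q : ℤ) : G :=
  (Fw M N r s p q) ^ (-r) * Dw M N r s * (Fw M N r s p q) ^ (-s)

variable {φ ψ : MulAut G} {M N X : G} {r s p q c d a b : ℤ}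

theorem theta_N (hφM : φ M = M) (hψN : ψ N = N)
    (hφN : φ N = M ^ r * N * M ^ s) (hψM : ψ M = N ^ p * M * N ^ q) :
    (φ * ψ * φ⁻¹ * ψ⁻¹) N = Ew M N r s p q := by
  have hψN' : (ψ⁻¹ : MulAut G) N = N := by
    conv_lhs => rw [← hψN]
    exact MulEquiv.symm_apply_apply _ _
  have hφN' : (φ⁻¹ : MulAut G) N = M ^ (-r) * N * M ^ (-s) := by
    have h1 : φ (M ^ (-r) * N * M ^ (-s)) = N := by
      simp only [map_mul, map_zpow, hφM, hφN]
      group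
    conv_lhs => rw [← h1]
    exact MulEquiv.symm_apply_apply _ _
  show φ (ψ ((φ⁻¹ : MulAut G) ((ψ⁻¹ : MulAut G) N))) = _
  rw [hψN', hφN']
  simp only [map_mul, map_zpow, hψM, hψN, hφM, hφN]
  simp only [Ew, Fw, Dw]

theorem theta_M (hφM : φ M = M) (hψN : ψ N = N)
    (hφN : φ N = M ^ r * N * M ^ s) (hψM : ψ M = N ^ p * M * N ^ q) :
    (φ * ψ * φ⁻¹ * ψ⁻¹) M =
      (Ew M N r s p q) ^ (-p) * Fw M N r s p q * (Ew M N r s p q) ^ (-q) := by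
  have hψM' : (ψ⁻¹ : MulAut G) M = N ^ (-p) * M * N ^ (-q) := by
    have h1 : ψ (N ^ (-p) * M * N ^ (-q)) = M := by
      simp only [map_mul, map_zpow, hψM, hψN]
      group
    conv_lhs => rw [← h1]
    exact MulEquiv.symm_apply_apply _ _
  have hφM' : (φ⁻¹ : MulAut G) M = M := by
    conv_lhs => rw [← hφM]
    exact MulEquiv.symm_apply_apply _ _
  have hφN' : (φ⁻¹ : MulAut G) N = M ^ (-r) * N * M ^ (-s) := by
    have h1 : φ (M ^ (-r) * N * M ^ (-s)) = N := by
      simp only [map_mul, map_zpow, hφM, hφN]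
      group
    conv_lhs => rw [← h1]
    exact MulEquiv.symm_apply_apply _ _
  show φ (ψ ((φ⁻¹ : MulAut G) ((ψ⁻¹ : MulAut G) M))) = _
  rw [hψM']
  simp only [map_mul, map_zpow, hφM', hφN', hψM, hψN, hφM, hφN]
  simp only [Ew, Fw, Dw]

theorem theta_X (hφM : φ M = M) (hψN : ψ N = N)
    (hφN : φ N = M ^ r * N * M ^ s) (hψM : ψ M = N ^ p * M * N ^ q)
    (hφX : φ X = M ^ c * X * M ^ d) (hψX : ψ X = N ^ a * X * N ^ b) :
    (φ * ψ * φ⁻¹ * ψ⁻¹) X =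
      (Ew M N r s p q) ^ (-a) * (Fw M N r s p q) ^ (-c) * (Dw M N r s) ^ a * M ^ c * X *
        M ^ d * (Dw M N r s) ^ b * (Fw M N r s p q) ^ (-d) * (Ew M N r s p q) ^ (-b) := by
  have hψX' : (ψ⁻¹ : MulAut G) X = N ^ (-a) * X * N ^ (-b) := by
    have h1 : ψ (N ^ (-a) * X * N ^ (-b)) = X := by
      simp only [map_mul, map_zpow, hψX, hψN]
      group
    conv_lhs => rw [← h1]
    exact MulEquiv.symm_apply_apply _ _
  have hφX' : (φ⁻¹ : MulAut G) X = M ^ (-c) * X * M ^ (-d) := by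
    have h1 : φ (M ^ (-c) * X * M ^ (-d)) = X := by
      simp only [map_mul, map_zpow, hφX, hφM]
      group
    conv_lhs => rw [← h1]
    exact MulEquiv.symm_apply_apply _ _
  have hφN' : (φ⁻¹ : MulAut G) N = M ^ (-r) * N * M ^ (-s) := by
    have h1 : φ (M ^ (-r) * N * M ^ (-s)) = N := by
      simp only [map_mul, map_zpow, hφM, hφN]
      group
    conv_lhs => rw [← h1]
    exact MulEquiv.symm_apply_apply _ _
  show φ (ψ ((φ⁻¹ : MulAut G) ((ψ⁻¹ : MulAut G) X))) = _
  rw [hψX']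
  simp only [map_mul, map_zpow, hφN', hφX', hψM, hψN, hψX, hφM, hφN, hφX]
  simp only [Ew, Fw, Dw]
  group

end Master

section PartitionHelpers

open scoped Classical

variable {Γ : SimpleGraph V}

theorem wh_gen_zpow {m : Vpm V} {P : Set (Vpm V)} {φ : MulAut (RAAG Γ)}
    (hP : GWSubset Γ m P) (hφ : IsWhitehead Γ P m φ) (x : Vpm V) (hx1 : x.1 ≠ m.1) :
    φ (gen Γ x) = gen Γ m ^ (if pinv x ∈ P then (1:ℤ) else 0) * gen Γ x *
      gen Γ m ^ (if x ∈ P then (-1:ℤ) else 0) := by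
  rw [wh_gen hP hφ x]
  by_cases h1 : pinv x ∈ P <;> by_cases h2 : x ∈ P <;> simp [h1, h2, hx1]

variable {Pa : GWPartition Γ}

theorem base_mem_P (Pa : GWPartition Γ) : Pa.base ∈ Pa.P := Pa.hP.1

theorem base_pinv_mem_Pstar (Pa : GWPartition Γ) : pinv Pa.base ∈ Pa.Pstar := Pa.hPstar.1

theorem P_disj_Pstar {x : Vpm V} (h1 : x ∈ Pa.P) (h2 : x ∈ Pa.Pstar) : False :=
  (mem_pstar_iff.mp h2).2 h1

theorem mem_P_or_Pstar {x : Vpm V} (h : x.1 ∉ lk Γ Pa.base.1) :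
    x ∈ Pa.P ∨ x ∈ Pa.Pstar := by
  by_cases hx : x ∈ Pa.P
  · exact Or.inl hx
  · exact Or.inr (mem_pstar_iff.mpr ⟨h, hx⟩)

theorem not_lk_of_mem_P {x : Vpm V} (h : x ∈ Pa.P) : x.1 ∉ lk Γ Pa.base.1 := Pa.hP.not_lk h

theorem not_lk_of_mem_Pstar {x : Vpm V} (h : x ∈ Pa.Pstar) : x.1 ∉ lk Γ Pa.base.1 :=
  (mem_pstar_iff.mp h).1

/-- An unsplit vertex outside the link lies (with both signs) in one side. -/
theorem unsplit_sides {v : V} (hlk : v ∉ lk Γ Pa.base.1) (h : ¬ Splits Pa v) :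
    ((v, true) ∈ Pa.P ∧ (v, false) ∈ Pa.P) ∨
      ((v, true) ∈ Pa.Pstar ∧ (v, false) ∈ Pa.Pstar) := by
  rcases mem_P_or_Pstar (Pa := Pa) (x := (v, true)) hlk with h1 | h1 <;>
    rcases mem_P_or_Pstar (Pa := Pa) (x := (v, false)) hlk with h2 | h2
  · exact Or.inl ⟨h1, h2⟩
  · exact absurd (Or.inl ⟨h1, h2⟩) h
  · exact absurd (Or.inr ⟨h2, h1⟩) h
  · exact Or.inr ⟨h1, h2⟩

/-- If `x` lies in the side `P` and its vertex is adjacent to a vertex `w` outside the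
link of the base, then both signs of `w` lie in `P`. -/
theorem side_adj_P {x : Vpm V} (hx : x ∈ Pa.P) {w : V} (hadj : Γ.Adj x.1 w)
    (hw : w ∉ lk Γ Pa.base.1) : (w, true) ∈ Pa.P ∧ (w, false) ∈ Pa.P :=
  Pa.hP.adj_mem hx hadj hw

theorem side_adj_Pstar {x : Vpm V} (hx : x ∈ Pa.Pstar) {w : V} (hadj : Γ.Adj x.1 w)
    (hw : w ∉ lk Γ Pa.base.1) : (w, true) ∈ Pa.Pstar ∧ (w, false) ∈ Pa.Pstar := by
  have h := Pa.hPstar.adj_mem (x := x) hx (w := w) hadj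
  exact h hw

theorem exists_other_P (Pa : GWPartition Γ) : ∃ x ∈ Pa.P, x ≠ Pa.base := by
  have h1 : 1 < Pa.P.ncard := lt_of_lt_of_le one_lt_two Pa.thickP
  exact Set.exists_ne_of_one_lt_ncard h1 Pa.base

theorem exists_other_Pstar (Pa : GWPartition Γ) : ∃ x ∈ Pa.Pstar, x ≠ pinv Pa.base := by
  have h1 : 1 < Pa.Pstar.ncard := lt_of_lt_of_le one_lt_two Pa.thickPstar
  exact Set.exists_ne_of_one_lt_ncard h1 (pinv Pa.base)

end PartitionHelpers

section Cert

def Mp : Equiv.Perm (Fin 5) := Equiv.swap 0 1 * Equiv.swap 2 4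
def Np : Equiv.Perm (Fin 5) := Equiv.swap 0 3 * Equiv.swap 1 4
def Xp : Equiv.Perm (Fin 5) := Equiv.swap 1 3 * Equiv.swap 2 4

/-- The full three-equation conjugation system expressing that `h` realizes the
commutator `θ` on the images of `M`, `N`, `X` in `Perm (Fin 5)`. -/
def certSys (r s p q c d a b : ℤ) (h : Equiv.Perm (Fin 5)) : Prop :=
  h * Mp * h⁻¹ = (Ew Mp Np r s p q) ^ (-p) * Fw Mp Np r s p q * (Ew Mp Np r s p q) ^ (-q) ∧
  h * Np * h⁻¹ = Ew Mp Np r s p q ∧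
  h * Xp * h⁻¹ = (Ew Mp Np r s p q) ^ (-a) * (Fw Mp Np r s p q) ^ (-c) * (Dw Mp Np r s) ^ a *
    Mp ^ c * Xp * Mp ^ d * (Dw Mp Np r s) ^ b * (Fw Mp Np r s p q) ^ (-d) *
      (Ew Mp Np r s p q) ^ (-b)

def certSys2 (r s p q : ℤ) (h : Equiv.Perm (Fin 5)) : Prop :=
  h * Mp * h⁻¹ = (Ew Mp Np r s p q) ^ (-p) * Fw Mp Np r s p q * (Ew Mp Np r s p q) ^ (-q) ∧
  h * Np * h⁻¹ = Ew Mp Np r s p q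

instance (r s p q c d a b : ℤ) (h : Equiv.Perm (Fin 5)) : Decidable (certSys r s p q c d a b h) := by
  unfold certSys; infer_instance

instance (r s p q : ℤ) (h : Equiv.Perm (Fin 5)) : Decidable (certSys2 r s p q h) := by
  unfold certSys2; infer_instance

set_option maxRecDepth 100000 in
theorem certG2I : ∀ (h : Equiv.Perm (Fin 5)) (c a : Bool),
    ¬ certSys 0 0 0 0 (cond c 1 0) (-1) (cond a 1 0) (-1) h := by decide

set_option maxRecDepth 100000 in
theorem certG2II : ∀ (h : Equiv.Perm (Fin 5)) (c a : Bool),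
    ¬ certSys 0 0 1 (-1) (cond c 1 0) (-1) (cond a 1 0) 0 h := by decide

set_option maxRecDepth 100000 in
theorem certG2IV : ∀ (h : Equiv.Perm (Fin 5)) (c a : Bool),
    ¬ certSys 1 (-1) 1 (-1) (cond c 1 0) 0 (cond a 1 0) 0 h := by decide

set_option maxRecDepth 100000 in
theorem certB0A1 : ∀ (h : Equiv.Perm (Fin 5)) (a b : Bool),
    ¬ certSys 0 0 0 (-1) 1 (-1) (cond a 1 0) (cond b (-1) 0) h := by decide

set_option maxRecDepth 100000 in
theorem certB1A1 : ∀ (h : Equiv.Perm (Fin 5)) (a b : Bool),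
    ¬ certSys 1 (-1) 0 (-1) 0 0 (cond a 1 0) (cond b (-1) 0) h := by decide

set_option maxRecDepth 100000 in
theorem certB0A2 : ∀ (h : Equiv.Perm (Fin 5)) (a b : Bool),
    ¬ certSys 0 0 1 0 1 (-1) (cond a 1 0) (cond b (-1) 0) h := by decide

set_option maxRecDepth 100000 in
theorem certB1A2 : ∀ (h : Equiv.Perm (Fin 5)) (a b : Bool),
    ¬ certSys 1 (-1) 1 0 0 0 (cond a 1 0) (cond b (-1) 0) h := by decide

set_option maxRecDepth 1000000 in
theorem certAsym : ∀ (h : Equiv.Perm (Fin 5)) (rB pB cd a b : Bool),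
    ¬ certSys (cond rB 1 0) (cond rB (-1) 0) (cond pB 1 0) (cond pB 0 (-1))
      (cond cd 1 0) (cond cd 0 (-1)) (cond a 1 0) (cond b (-1) 0) h := by decide

set_option maxRecDepth 100000 in
theorem cert2eq : ∀ (h : Equiv.Perm (Fin 5)) (rB pB : Bool),
    ¬ certSys2 (cond rB 1 0) (cond rB 0 (-1)) (cond pB 1 0) (cond pB 0 (-1)) h := by decide

end Cert

section Part1

variable {Γ : SimpleGraph V}

theorem mul_middle_comm {G : Type*} [Group G] {A B C D x : G}
    (h1 : A * B = B * A) (h2 : C * D = D * C) :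
    A * (B * x * C) * D = B * (A * x * D) * C := by
  rw [show A * (B * x * C) * D = (A * B) * (x * (C * D)) by group, h1, h2,
    show (B * A) * (x * (D * C)) = B * (A * x * D) * C by group]

theorem wh_fix_of_lk_or_base {m : Vpm V} {P : Set (Vpm V)} {φ : MulAut (RAAG Γ)}
    (hP : GWSubset Γ m P) (hφ : IsWhitehead Γ P m φ) (x : Vpm V)
    (hx : x.1 = m.1 ∨ x.1 ∈ lk Γ m.1) : φ (gen Γ x) = gen Γ x := by
  rw [wh_gen hP hφ x]
  rcases hx with he | hl
  · simp [he]
  · have h1 : pinv x ∉ P := fun h => hP.not_lk h hl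
    have h2 : x ∉ P := fun h => hP.not_lk h hl
    simp [h1, h2]

theorem part1 {Pa Qa : GWPartition Γ} {φ ψ : MulAut (RAAG Γ)}
    (hφ : IsWhitehead Γ Pa.P Pa.base φ) (hψ : IsWhitehead Γ Qa.P Qa.base ψ)
    (hcomm : Pa.base.1 = Qa.base.1 ∨ Γ.Adj Pa.base.1 Qa.base.1) : φ * ψ = ψ * φ := by
  classical
  have hMN : Commute (gen Γ Pa.base) (gen Γ Qa.base) := gen_commute hcomm
  have fixφ : φ (gen Γ Qa.base) = gen Γ Qa.base := by
    apply wh_fix_of_lk_or_base Pa.hP hφ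
    rcases hcomm with he | ha
    · exact Or.inl he.symm
    · exact Or.inr ha
  have fixψ : ψ (gen Γ Pa.base) = gen Γ Pa.base := by
    apply wh_fix_of_lk_or_base Qa.hP hψ
    rcases hcomm with he | ha
    · exact Or.inl he
    · exact Or.inr ha.symm
  apply aut_ext; intro v
  show φ (ψ (ofv Γ v)) = ψ (φ (ofv Γ v))
  have hv : ofv Γ v = gen Γ (v, true) := rfl
  rw [hv, wh_gen Qa.hP hψ (v, true), wh_gen Pa.hP hφ (v, true)]
  simp only [map_mul, apply_ite φ, apply_ite ψ, map_one, map_inv, fixφ, fixψ,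
    wh_gen Pa.hP hφ (v, true), wh_gen Qa.hP hψ (v, true)]
  apply mul_middle_comm
  · split_ifs <;> simp [hMN.symm.eq]
  · split_ifs <;> simp [(hMN.inv_left.inv_right).eq]

end Part1

section Backward

variable {Γ : SimpleGraph V}

@[simp] theorem pinv_mk (v : V) (b : Bool) : pinv (v, b) = (v, !b) := rfl

theorem sandwich4 {G : Type*} [Group G] {A B C D A' B' C' D' g x : G}
    (h1 : A * B = g * (A' * B')) (h2 : C * D = (C' * D') * g⁻¹) :
    A * (B * x * C) * D = g * (A' * (B' * x * C') * D') * g⁻¹ := by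
  calc A * (B * x * C) * D = (A * B) * x * (C * D) := by group
    _ = (g * (A' * B')) * x * ((C' * D') * g⁻¹) := by rw [h1, h2]
    _ = g * (A' * (B' * x * C') * D') * g⁻¹ := by group

theorem sandwich4' {G : Type*} [Group G] {A B C D A' B' C' D' x : G}
    (h1 : A * B = A' * B') (h2 : C * D = C' * D') :
    A * (B * x * C) * D = A' * (B' * x * C') * D' := by
  have := sandwich4 (g := 1) (x := x) (by simpa using h1) (by simpa using h2)
  simpa using this

variable {Pa Qa : GWPartition Γ} {φ ψ : MulAut (RAAG Γ)}

/-- Config I: `P ∩ Q = ∅`, both bases in the far sides: exact commutation. -/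
theorem cfgI (hφ : IsWhitehead Γ Pa.P Pa.base φ) (hψ : IsWhitehead Γ Qa.P Qa.base ψ)
    (hfixφ : φ (gen Γ Qa.base) = gen Γ Qa.base)
    (hfixψ : ψ (gen Γ Pa.base) = gen Γ Pa.base)
    (hdisj : ∀ x : Vpm V, x ∈ Pa.P → x ∉ Qa.P) : φ * ψ = ψ * φ := by
  classical
  apply aut_ext; intro v
  show φ (ψ (ofv Γ v)) = ψ (φ (ofv Γ v))
  rw [show ofv Γ v = gen Γ (v, true) from rfl, wh_gen Qa.hP hψ (v, true),
    wh_gen Pa.hP hφ (v, true)]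
  simp only [map_mul, apply_ite φ, apply_ite ψ, map_one, map_inv, hfixφ, hfixψ,
    wh_gen Pa.hP hφ (v, true), wh_gen Qa.hP hψ (v, true), pinv_mk, Bool.not_true]
  apply sandwich4'
  · split_ifs with h1 h2 h2
    · exact absurd h1.1 (hdisj _ h2.1)
    · simp
    · simp
    · simp
  · split_ifs with h1 h2 h2
    · exact absurd h2.1 (hdisj _ h1.1)
    · simp
    · simp
    · simp

theorem mem_of_pair {S : Set (Vpm V)} {v : V} (h : (v, true) ∈ S ∧ (v, false) ∈ S)
    (x : Vpm V) (hx : x.1 = v) : x ∈ S := by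
  obtain ⟨w, b⟩ := x
  simp only at hx
  subst hx
  cases b
  · exact h.2
  · exact h.1

/-- Config II: `P ∩ Q* = ∅`, `n^± ⊆ P*`, `m^± ⊆ Q`: exact commutation. -/
theorem cfgII (hφ : IsWhitehead Γ Pa.P Pa.base φ) (hψ : IsWhitehead Γ Qa.P Qa.base ψ)
    (hnadj : ¬ Γ.Adj Pa.base.1 Qa.base.1) (hne : Pa.base.1 ≠ Qa.base.1)
    (hnP : (Qa.base.1, true) ∈ Pa.Pstar ∧ (Qa.base.1, false) ∈ Pa.Pstar)
    (hmQ : (Pa.base.1, true) ∈ Qa.P ∧ (Pa.base.1, false) ∈ Qa.P)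
    (hdisj : ∀ x : Vpm V, x ∈ Pa.P → x ∉ Qa.Pstar) : φ * ψ = ψ * φ := by
  classical
  have hnmlk : Qa.base.1 ∉ lk Γ Pa.base.1 := hnadj
  have hmnlk : Pa.base.1 ∉ lk Γ Qa.base.1 := fun h => hnadj h.symm
  have hfixφ : φ (gen Γ Qa.base) = gen Γ Qa.base := by
    rw [wh_gen Pa.hP hφ]
    have h1 : Qa.base ∉ Pa.P := fun h => P_disj_Pstar h (mem_of_pair hnP _ rfl)
    have h2 : pinv Qa.base ∉ Pa.P := fun h => P_disj_Pstar h (mem_of_pair hnP _ rfl)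
    simp [h1, h2]
  have hψM : ψ (gen Γ Pa.base) =
      gen Γ Qa.base * gen Γ Pa.base * (gen Γ Qa.base)⁻¹ := by
    rw [wh_gen Qa.hP hψ]
    rw [if_pos ⟨mem_of_pair hmQ _ rfl, hne⟩, if_pos ⟨mem_of_pair hmQ _ rfl, hne⟩]
  have claim : ∀ (v : V) (b : Bool), (v, b) ∈ Pa.P ∧ v ≠ Pa.base.1 →
      ((v, b) ∈ Qa.P ∧ v ≠ Qa.base.1) := by
    rintro v b ⟨hp, -⟩
    have hvn : v ≠ Qa.base.1 := by
      rintro rfl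
      cases b
      · exact P_disj_Pstar hp hnP.2
      · exact P_disj_Pstar hp hnP.1
    refine ⟨?_, hvn⟩
    have hnlkn : v ∉ lk Γ Qa.base.1 := by
      intro hl
      have hadj : Γ.Adj v Qa.base.1 := SimpleGraph.Adj.symm hl
      have h := side_adj_P (Pa := Pa) hp hadj hnmlk
      exact P_disj_Pstar h.1 hnP.1
    rcases mem_P_or_Pstar (Pa := Qa) (x := (v, b)) hnlkn with h | h
    · exact h
    · exact absurd h (hdisj _ hp)
  apply aut_ext; intro v
  show φ (ψ (ofv Γ v)) = ψ (φ (ofv Γ v))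
  rw [show ofv Γ v = gen Γ (v, true) from rfl, wh_gen Qa.hP hψ (v, true),
    wh_gen Pa.hP hφ (v, true)]
  simp only [map_mul, apply_ite φ, apply_ite ψ, map_one, map_inv, hfixφ, hψM,
    wh_gen Pa.hP hφ (v, true), wh_gen Qa.hP hψ (v, true)]
  apply sandwich4'
  · split_ifs with hA hB hB
    · group
    · simp
    · exact absurd (claim v false hB) (by simpa using hA)
    · simp
  · split_ifs with hA hB hB
    · group
    · exact absurd (claim v true hA) (by simpa using hB)
    · simp
    · simp


/-- Config IV: `P* ∩ Q* = ∅`, `n^± ⊆ P`, `m^± ⊆ Q`: commutation up to conjugation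
by the commutator of the base generators. -/
theorem cfgIV (hφ : IsWhitehead Γ Pa.P Pa.base φ) (hψ : IsWhitehead Γ Qa.P Qa.base ψ)
    (hnadj : ¬ Γ.Adj Pa.base.1 Qa.base.1) (hne : Pa.base.1 ≠ Qa.base.1)
    (hnP : (Qa.base.1, true) ∈ Pa.P ∧ (Qa.base.1, false) ∈ Pa.P)
    (hmQ : (Pa.base.1, true) ∈ Qa.P ∧ (Pa.base.1, false) ∈ Qa.P)
    (hdisj : ∀ x : Vpm V, x ∈ Pa.Pstar → x ∉ Qa.Pstar) :
    φ * ψ = MulAut.conj (gen Γ Pa.base * gen Γ Qa.base * (gen Γ Pa.base)⁻¹ *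
      (gen Γ Qa.base)⁻¹) * (ψ * φ) := by
  classical
  set M := gen Γ Pa.base with hM
  set N := gen Γ Qa.base with hN
  have hnmlk : Qa.base.1 ∉ lk Γ Pa.base.1 := hnadj
  have hmnlk : Pa.base.1 ∉ lk Γ Qa.base.1 := fun h => hnadj h.symm
  have hφN : φ N = M * N * M⁻¹ := by
    rw [hN, hM, wh_gen Pa.hP hφ]
    rw [if_pos ⟨mem_of_pair hnP _ rfl, hne.symm⟩, if_pos ⟨mem_of_pair hnP _ rfl, hne.symm⟩]
  have hψM : ψ M = N * M * N⁻¹ := by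
    rw [hN, hM, wh_gen Qa.hP hψ]
    rw [if_pos ⟨mem_of_pair hmQ _ rfl, hne⟩, if_pos ⟨mem_of_pair hmQ _ rfl, hne⟩]
  have claim : ∀ (v : V) (b : Bool), ¬ (v ∈ lk Γ Pa.base.1 ∧ v ∈ lk Γ Qa.base.1) →
      ((v, b) ∈ Qa.P ∧ v ≠ Qa.base.1) ∨ ((v, b) ∈ Pa.P ∧ v ≠ Pa.base.1) := by
    intro v b hvm
    by_cases hvM : v = Pa.base.1
    · subst hvM
      exact Or.inl ⟨mem_of_pair hmQ _ rfl, hne⟩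
    by_cases hvN : v = Qa.base.1
    · subst hvN
      exact Or.inr ⟨mem_of_pair hnP _ rfl, hne.symm⟩
    by_cases hlm : v ∈ lk Γ Pa.base.1
    · have hln : v ∉ lk Γ Qa.base.1 := fun h => hvm ⟨hlm, h⟩
      rcases mem_P_or_Pstar (Pa := Qa) (x := (v, b)) hln with h | h
      · exact Or.inl ⟨h, hvN⟩
      · have := side_adj_Pstar (Pa := Qa) h (SimpleGraph.Adj.symm hlm) hmnlk
        exact absurd (mem_of_pair this (Pa.base.1, true) rfl)
          (fun hh => P_disj_Pstar (Pa := Qa) hmQ.1 hh)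
    by_cases hln : v ∈ lk Γ Qa.base.1
    · rcases mem_P_or_Pstar (Pa := Pa) (x := (v, b)) hlm with h | h
      · exact Or.inr ⟨h, hvM⟩
      · have := side_adj_Pstar (Pa := Pa) h (SimpleGraph.Adj.symm hln) hnmlk
        exact absurd (mem_of_pair this (Qa.base.1, true) rfl)
          (fun hh => P_disj_Pstar (Pa := Pa) hnP.1 hh)
    · rcases mem_P_or_Pstar (Pa := Pa) (x := (v, b)) hlm with h | h
      · exact Or.inr ⟨h, hvM⟩
      · have h2 : (v, b) ∉ Qa.Pstar := hdisj _ h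
        rcases mem_P_or_Pstar (Pa := Qa) (x := (v, b)) hln with h3 | h3
        · exact Or.inl ⟨h3, hvN⟩
        · exact absurd h3 h2
  apply aut_ext; intro v
  show φ (ψ (ofv Γ v)) = (MulAut.conj (M * N * M⁻¹ * N⁻¹) * (ψ * φ)) (ofv Γ v)
  have hrhs : (MulAut.conj (M * N * M⁻¹ * N⁻¹) * (ψ * φ)) (ofv Γ v) = (M * N * M⁻¹ * N⁻¹) * ψ (φ (ofv Γ v)) * (M * N * M⁻¹ * N⁻¹)⁻¹ := rfl
  rw [hrhs]
  by_cases hvb : v ∈ lk Γ Pa.base.1 ∧ v ∈ lk Γ Qa.base.1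
  · have c1 : Commute (ofv Γ v) M := by
      rw [hM]
      exact gen_commute (x := (v, true)) (y := Pa.base) (Or.inr (SimpleGraph.Adj.symm hvb.1))
    have c2 : Commute (ofv Γ v) N := by
      rw [hN]
      exact gen_commute (x := (v, true)) (y := Qa.base) (Or.inr (SimpleGraph.Adj.symm hvb.2))
    have hfix1 : φ (ofv Γ v) = ofv Γ v := by
      have := wh_fix_of_lk_or_base Pa.hP hφ (v, true) (Or.inr hvb.1)
      simpa using this
    have hfix2 : ψ (ofv Γ v) = ofv Γ v := by
      have := wh_fix_of_lk_or_base Qa.hP hψ (v, true) (Or.inr hvb.2)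
      simpa using this
    rw [hfix2, hfix1, hfix2]
    have cg : Commute (ofv Γ v) (M * N * M⁻¹ * N⁻¹) :=
      ((c1.mul_right c2).mul_right c1.inv_right).mul_right c2.inv_right
    rw [cg.symm.eq, mul_inv_cancel_right]
  · rw [show ofv Γ v = gen Γ (v, true) from rfl, wh_gen Qa.hP hψ (v, true),
      wh_gen Pa.hP hφ (v, true)]
    simp only [map_mul, apply_ite φ, apply_ite ψ, map_one, map_inv, hφN, hψM,
      wh_gen Pa.hP hφ (v, true), wh_gen Qa.hP hψ (v, true), ← hM, ← hN]
    apply sandwich4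
    · split_ifs with hA hB hB
      · group
      · group
      · group
      · rcases claim v false hvb with hc | hc
        · exact absurd hc (by simpa using hA)
        · exact absurd hc (by simpa using hB)
    · split_ifs with hA hB hB
      · group
      · group
      · group
      · rcases claim v true hvb with hc | hc
        · exact absurd hc (by simpa using hB)
        · exact absurd hc (by simpa using hA)

end Backward

section ForwardInfra

variable {Γ : SimpleGraph V}

theorem splits_iff {Pa : GWPartition Γ} {v : V} (hlk : v ∉ lk Γ Pa.base.1) :
    Splits Pa v ↔ ((v, true) ∈ Pa.P ∧ (v, false) ∉ Pa.P) ∨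
      ((v, false) ∈ Pa.P ∧ (v, true) ∉ Pa.P) := by
  unfold Splits
  constructor
  · rintro (⟨h1, h2⟩ | ⟨h1, h2⟩)
    · exact Or.inl ⟨h1, (mem_pstar_iff.mp h2).2⟩
    · exact Or.inr ⟨h1, (mem_pstar_iff.mp h2).2⟩
  · rintro (⟨h1, h2⟩ | ⟨h1, h2⟩)
    · exact Or.inl ⟨h1, mem_pstar_iff.mpr ⟨hlk, h2⟩⟩
    · exact Or.inr ⟨h1, mem_pstar_iff.mpr ⟨hlk, h2⟩⟩

theorem splits_signed {Pa : GWPartition Γ} {x : Vpm V} (hlk : x.1 ∉ lk Γ Pa.base.1)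
    (h : Splits Pa x.1) :
    (x ∈ Pa.P ∧ pinv x ∉ Pa.P) ∨ (pinv x ∈ Pa.P ∧ x ∉ Pa.P) := by
  rw [splits_iff hlk] at h
  obtain ⟨v, b⟩ := x
  cases b <;> simp only [pinv_mk, Bool.not_false, Bool.not_true] <;> tauto

theorem unsplit_signed {Pa : GWPartition Γ} {x : Vpm V} (hlk : x.1 ∉ lk Γ Pa.base.1)
    (h : ¬ Splits Pa x.1) :
    (x ∈ Pa.P ∧ pinv x ∈ Pa.P) ∨ (x ∉ Pa.P ∧ pinv x ∉ Pa.P) := by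
  rw [splits_iff hlk] at h
  push_neg at h
  obtain ⟨v, b⟩ := x
  by_cases h1 : (v, true) ∈ Pa.P <;> by_cases h2 : (v, false) ∈ Pa.P <;>
    cases b <;> simp only [pinv_mk, Bool.not_false, Bool.not_true] <;> tauto

open scoped Classical in
/-- Vertex assignment for the permutation certificate homomorphism. -/
noncomputable def certf (mv nv xv : V) (sm sn sx : Bool) : V → Equiv.Perm (Fin 5) :=
  fun v => if v = mv then (if sm then Mp else Mp⁻¹)
    else if v = nv then (if sn then Np else Np⁻¹)
    else if v = xv then (if sx then Xp else Xp⁻¹) else 1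

theorem certf_comm {mv nv xv : V} {sm sn sx : Bool}
    (hmn : ¬ Γ.Adj mv nv) (hmx : ¬ Γ.Adj mv xv) (hnx : ¬ Γ.Adj nv xv) :
    ∀ u w, Γ.Adj u w → Commute (certf mv nv xv sm sn sx u) (certf mv nv xv sm sn sx w) := by
  classical
  intro u w hadj
  have key : ∀ y, certf mv nv xv sm sn sx y ≠ 1 → y = mv ∨ y = nv ∨ y = xv := by
    intro y hy
    by_contra hc
    push_neg at hc
    simp [certf, hc.1, hc.2.1, hc.2.2] at hy
  by_cases h1 : certf mv nv xv sm sn sx u = 1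
  · rw [h1]; exact Commute.one_left _
  by_cases h2 : certf mv nv xv sm sn sx w = 1
  · rw [h2]; exact Commute.one_right _
  rcases key u h1 with rfl | rfl | rfl <;> rcases key w h2 with rfl | rfl | rfl <;>
    first
      | exact absurd hadj (Γ.irrefl)
      | exact absurd hadj hmn
      | exact absurd hadj hmx
      | exact absurd hadj hnx
      | exact absurd hadj.symm hmn
      | exact absurd hadj.symm hmx
      | exact absurd hadj.symm hnx
      | exact Commute.refl _

theorem raagLift_gen {H : Type*} [Group H] (f : V → H)
    (hf : ∀ u w, Γ.Adj u w → Commute (f u) (f w)) (x : Vpm V) (g : H)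
    (hfx : f x.1 = if x.2 then g else g⁻¹) : raagLift f hf (gen Γ x) = g := by
  obtain ⟨v, b⟩ := x
  cases b <;> simp_all [gen]

end ForwardInfra

section Transfer

variable {Γ : SimpleGraph V} {Pa Qa : GWPartition Γ} {φ ψ : MulAut (RAAG Γ)}

theorem certSys_of_inner
    (hφ : IsWhitehead Γ Pa.P Pa.base φ) (hψ : IsWhitehead Γ Qa.P Qa.base ψ)
    (hne : Pa.base.1 ≠ Qa.base.1) (hnadj : ¬ Γ.Adj Pa.base.1 Qa.base.1)
    (hinner : IsInner (φ * ψ * φ⁻¹ * ψ⁻¹))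
    {x : Vpm V} (hxm : x.1 ≠ Pa.base.1) (hxn : x.1 ≠ Qa.base.1)
    (hxlm : x.1 ∉ lk Γ Pa.base.1) (hxln : x.1 ∉ lk Γ Qa.base.1)
    {r s p q c d a b : ℤ}
    (hφN : φ (gen Γ Qa.base) = gen Γ Pa.base ^ r * gen Γ Qa.base * gen Γ Pa.base ^ s)
    (hψM : ψ (gen Γ Pa.base) = gen Γ Qa.base ^ p * gen Γ Pa.base * gen Γ Qa.base ^ q)
    (hφX : φ (gen Γ x) = gen Γ Pa.base ^ c * gen Γ x * gen Γ Pa.base ^ d)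
    (hψX : ψ (gen Γ x) = gen Γ Qa.base ^ a * gen Γ x * gen Γ Qa.base ^ b) :
    ∃ h : Equiv.Perm (Fin 5), certSys r s p q c d a b h := by
  classical
  obtain ⟨g, hg⟩ := hinner
  have hφM : φ (gen Γ Pa.base) = gen Γ Pa.base := wh_gen_base Pa.hP hφ
  have hψN : ψ (gen Γ Qa.base) = gen Γ Qa.base := wh_gen_base Qa.hP hψ
  have tN := theta_N (φ := φ) (ψ := ψ) hφM hψN hφN hψM
  have tM := theta_M (φ := φ) (ψ := ψ) hφM hψN hφN hψM
  have tX := theta_X (φ := φ) (ψ := ψ) hφM hψN hφN hψM hφX hψX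
  have hcomm := certf_comm (Γ := Γ) (mv := Pa.base.1) (nv := Qa.base.1) (xv := x.1)
      (sm := Pa.base.2) (sn := Qa.base.2) (sx := x.2) hnadj hxlm hxln
  set f := certf Pa.base.1 Qa.base.1 x.1 Pa.base.2 Qa.base.2 x.2 with hf
  set Φ := raagLift f hcomm with hΦ
  have vM : Φ (gen Γ Pa.base) = Mp :=
    raagLift_gen f hcomm Pa.base Mp (by simp [hf, certf])
  have vN : Φ (gen Γ Qa.base) = Np :=
    raagLift_gen f hcomm Qa.base Np (by simp [hf, certf, hne.symm])
  have vX : Φ (gen Γ x) = Xp :=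
    raagLift_gen f hcomm x Xp (by simp [hf, certf, hxm, hxn])
  refine ⟨Φ g, ?_, ?_, ?_⟩
  · have e1 : (Ew (gen Γ Pa.base) (gen Γ Qa.base) r s p q) ^ (-p) *
        Fw (gen Γ Pa.base) (gen Γ Qa.base) r s p q *
        (Ew (gen Γ Pa.base) (gen Γ Qa.base) r s p q) ^ (-q) =
        g * gen Γ Pa.base * g⁻¹ := by rw [← tM]; exact hg _
    have e2 := congrArg Φ e1
    simp only [map_mul, map_zpow, map_inv, Ew, Fw, Dw, vM, vN] at e2
    simp only [Ew, Fw, Dw]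
    exact e2.symm
  · have e1 : Ew (gen Γ Pa.base) (gen Γ Qa.base) r s p q = g * gen Γ Qa.base * g⁻¹ := by
      rw [← tN]; exact hg _
    have e2 := congrArg Φ e1
    simp only [map_mul, map_zpow, map_inv, Ew, Fw, Dw, vM, vN] at e2
    simp only [Ew, Fw, Dw]
    exact e2.symm
  · have e1 : (Ew (gen Γ Pa.base) (gen Γ Qa.base) r s p q) ^ (-a) *
        (Fw (gen Γ Pa.base) (gen Γ Qa.base) r s p q) ^ (-c) *
        (Dw (gen Γ Pa.base) (gen Γ Qa.base) r s) ^ a * (gen Γ Pa.base) ^ c * gen Γ x *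
        (gen Γ Pa.base) ^ d * (Dw (gen Γ Pa.base) (gen Γ Qa.base) r s) ^ b *
        (Fw (gen Γ Pa.base) (gen Γ Qa.base) r s p q) ^ (-d) *
        (Ew (gen Γ Pa.base) (gen Γ Qa.base) r s p q) ^ (-b) = g * gen Γ x * g⁻¹ := by
      rw [← tX]; exact hg _
    have e2 := congrArg Φ e1
    simp only [map_mul, map_zpow, map_inv, Ew, Fw, Dw, vM, vN, vX] at e2
    simp only [Ew, Fw, Dw]
    exact e2.symm

theorem certSys2_of_inner
    (hφ : IsWhitehead Γ Pa.P Pa.base φ) (hψ : IsWhitehead Γ Qa.P Qa.base ψ)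
    (hne : Pa.base.1 ≠ Qa.base.1) (hnadj : ¬ Γ.Adj Pa.base.1 Qa.base.1)
    (hinner : IsInner (φ * ψ * φ⁻¹ * ψ⁻¹))
    {r s p q : ℤ}
    (hφN : φ (gen Γ Qa.base) = gen Γ Pa.base ^ r * gen Γ Qa.base * gen Γ Pa.base ^ s)
    (hψM : ψ (gen Γ Pa.base) = gen Γ Qa.base ^ p * gen Γ Pa.base * gen Γ Qa.base ^ q) :
    ∃ h : Equiv.Perm (Fin 5), certSys2 r s p q h := by
  classical
  obtain ⟨g, hg⟩ := hinner
  have hφM : φ (gen Γ Pa.base) = gen Γ Pa.base := wh_gen_base Pa.hP hφ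
  have hψN : ψ (gen Γ Qa.base) = gen Γ Qa.base := wh_gen_base Qa.hP hψ
  have tN := theta_N (φ := φ) (ψ := ψ) hφM hψN hφN hψM
  have tM := theta_M (φ := φ) (ψ := ψ) hφM hψN hφN hψM
  have hcomm := certf_comm (Γ := Γ) (mv := Pa.base.1) (nv := Qa.base.1) (xv := Pa.base.1)
      (sm := Pa.base.2) (sn := Qa.base.2) (sx := Pa.base.2) hnadj (fun h => Γ.irrefl h)
      (fun h => hnadj h.symm)
  set f := certf Pa.base.1 Qa.base.1 Pa.base.1 Pa.base.2 Qa.base.2 Pa.base.2 with hf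
  set Φ := raagLift f hcomm with hΦ
  have vM : Φ (gen Γ Pa.base) = Mp :=
    raagLift_gen f hcomm Pa.base Mp (by simp [hf, certf])
  have vN : Φ (gen Γ Qa.base) = Np :=
    raagLift_gen f hcomm Qa.base Np (by simp [hf, certf, hne.symm])
  refine ⟨Φ g, ?_, ?_⟩
  · have e1 : (Ew (gen Γ Pa.base) (gen Γ Qa.base) r s p q) ^ (-p) *
        Fw (gen Γ Pa.base) (gen Γ Qa.base) r s p q *
        (Ew (gen Γ Pa.base) (gen Γ Qa.base) r s p q) ^ (-q) =
        g * gen Γ Pa.base * g⁻¹ := by rw [← tM]; exact hg _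
    have e2 := congrArg Φ e1
    simp only [map_mul, map_zpow, map_inv, Ew, Fw, Dw, vM, vN] at e2
    simp only [Ew, Fw, Dw]
    exact e2.symm
  · have e1 : Ew (gen Γ Pa.base) (gen Γ Qa.base) r s p q = g * gen Γ Qa.base * g⁻¹ := by
      rw [← tN]; exact hg _
    have e2 := congrArg Φ e1
    simp only [map_mul, map_zpow, map_inv, Ew, Fw, Dw, vM, vN] at e2
    simp only [Ew, Fw, Dw]
    exact e2.symm

end Transfer

section Forward

variable {Γ : SimpleGraph V} {Pa Qa : GWPartition Γ} {φ ψ : MulAut (RAAG Γ)}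

theorem eq_or_pinv {x y : Vpm V} (h : x.1 = y.1) : x = y ∨ x = pinv y := by
  obtain ⟨v, b⟩ := x; obtain ⟨w, c⟩ := y
  simp only at h
  subst h
  cases b <;> cases c <;> simp [pinv]

theorem noSplit_core
    (hφ : IsWhitehead Γ Pa.P Pa.base φ) (hψ : IsWhitehead Γ Qa.P Qa.base ψ)
    (hne : Pa.base.1 ≠ Qa.base.1) (hnadj : ¬ Γ.Adj Pa.base.1 Qa.base.1)
    (hinner : IsInner (φ * ψ * φ⁻¹ * ψ⁻¹)) (pB : Bool)
    (hp : ψ (gen Γ Pa.base) = gen Γ Qa.base ^ (cond pB 1 0 : ℤ) * gen Γ Pa.base *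
      gen Γ Qa.base ^ (cond pB 0 (-1) : ℤ)) : False := by
  classical
  have hnmlk : Qa.base.1 ∉ lk Γ Pa.base.1 := hnadj
  have hmnlk : Pa.base.1 ∉ lk Γ Qa.base.1 := fun h => hnadj h.symm
  have hφN0 := wh_gen_zpow Pa.hP hφ Qa.base hne.symm
  by_cases hnt : Qa.base ∈ Pa.P
  case pos =>
   by_cases hnp : pinv Qa.base ∈ Pa.P
   case pos =>
    have hφN : φ (gen Γ Qa.base) = gen Γ Pa.base ^ (1 : ℤ) * gen Γ Qa.base *
        gen Γ Pa.base ^ (-1 : ℤ) := by rw [hφN0, if_pos hnp, if_pos hnt]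
    -- witness from P*
    obtain ⟨x, hxPs, hxne⟩ := exists_other_Pstar Pa
    have hxm : x.1 ≠ Pa.base.1 := by
      intro h
      rcases eq_or_pinv h with rfl | rfl
      · exact P_disj_Pstar (base_mem_P Pa) hxPs
      · exact hxne rfl
    have hxn : x.1 ≠ Qa.base.1 := by
      intro h
      rcases eq_or_pinv h with rfl | rfl
      · exact P_disj_Pstar hnt hxPs
      · exact P_disj_Pstar hnp (by simpa [pinv] using hxPs)
    have hxlm : x.1 ∉ lk Γ Pa.base.1 := not_lk_of_mem_Pstar hxPs
    have hxln : x.1 ∉ lk Γ Qa.base.1 := by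
      intro hl
      have := side_adj_Pstar (Pa := Pa) hxPs (SimpleGraph.Adj.symm hl) hnmlk
      exact P_disj_Pstar hnt (mem_of_pair this Qa.base rfl)
    -- by symmetry or not: here we do NOT need symmetry: we need (c,d) = (0,0):
    -- x ∈ P* gives x ∉ P; we must also handle pinv x ∈ P (asymmetric) separately.
    by_cases hpx : pinv x ∈ Pa.P
    · -- asymmetric pattern (c,d) = (1,0)
      have hφX : φ (gen Γ x) = gen Γ Pa.base ^ (1 : ℤ) * gen Γ x *
          gen Γ Pa.base ^ (0 : ℤ) := by
        rw [wh_gen_zpow Pa.hP hφ x hxm, if_pos hpx,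
          if_neg (fun h => P_disj_Pstar h hxPs)]
      have hψX0 := wh_gen_zpow Qa.hP hψ x hxn
      by_cases ha : pinv x ∈ Qa.P <;> by_cases hb : x ∈ Qa.P
      all_goals {
        first
        | (have hψX : ψ (gen Γ x) = gen Γ Qa.base ^ (1 : ℤ) * gen Γ x *
              gen Γ Qa.base ^ (-1 : ℤ) := by rw [hψX0, if_pos ‹pinv x ∈ Qa.P›, if_pos ‹x ∈ Qa.P›]
           obtain ⟨h, hc⟩ := certSys_of_inner hφ hψ hne hnadj hinner hxm hxn hxlm hxln hφN hp hφX hψX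
           exact certAsym h true pB true true true hc)
        | (have hψX : ψ (gen Γ x) = gen Γ Qa.base ^ (1 : ℤ) * gen Γ x *
              gen Γ Qa.base ^ (0 : ℤ) := by rw [hψX0, if_pos ‹pinv x ∈ Qa.P›, if_neg ‹x ∉ Qa.P›]
           obtain ⟨h, hc⟩ := certSys_of_inner hφ hψ hne hnadj hinner hxm hxn hxlm hxln hφN hp hφX hψX
           exact certAsym h true pB true true false hc)
        | (have hψX : ψ (gen Γ x) = gen Γ Qa.base ^ (0 : ℤ) * gen Γ x *
              gen Γ Qa.base ^ (-1 : ℤ) := by rw [hψX0, if_neg ‹pinv x ∉ Qa.P›, if_pos ‹x ∈ Qa.P›]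
           obtain ⟨h, hc⟩ := certSys_of_inner hφ hψ hne hnadj hinner hxm hxn hxlm hxln hφN hp hφX hψX
           exact certAsym h true pB true false true hc)
        | (have hψX : ψ (gen Γ x) = gen Γ Qa.base ^ (0 : ℤ) * gen Γ x *
              gen Γ Qa.base ^ (0 : ℤ) := by rw [hψX0, if_neg ‹pinv x ∉ Qa.P›, if_neg ‹x ∉ Qa.P›]
           obtain ⟨h, hc⟩ := certSys_of_inner hφ hψ hne hnadj hinner hxm hxn hxlm hxln hφN hp hφX hψX
           exact certAsym h true pB true false false hc)
      }
    · -- symmetric pattern (c,d) = (0,0) : B1 scenario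
      have hφX : φ (gen Γ x) = gen Γ Pa.base ^ (0 : ℤ) * gen Γ x *
          gen Γ Pa.base ^ (0 : ℤ) := by
        rw [wh_gen_zpow Pa.hP hφ x hxm, if_neg hpx,
          if_neg (fun h => P_disj_Pstar h hxPs)]
      have hψX0 := wh_gen_zpow Qa.hP hψ x hxn
      by_cases ha : pinv x ∈ Qa.P <;> by_cases hb : x ∈ Qa.P
      all_goals {
        first
        | (have hψX : ψ (gen Γ x) = gen Γ Qa.base ^ (1 : ℤ) * gen Γ x *
              gen Γ Qa.base ^ (-1 : ℤ) := by rw [hψX0, if_pos ‹pinv x ∈ Qa.P›, if_pos ‹x ∈ Qa.P›]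
           obtain ⟨h, hc⟩ := certSys_of_inner hφ hψ hne hnadj hinner hxm hxn hxlm hxln hφN hp hφX hψX
           cases pB
           · exact certB1A1 h true true hc
           · exact certB1A2 h true true hc)
        | (have hψX : ψ (gen Γ x) = gen Γ Qa.base ^ (1 : ℤ) * gen Γ x *
              gen Γ Qa.base ^ (0 : ℤ) := by rw [hψX0, if_pos ‹pinv x ∈ Qa.P›, if_neg ‹x ∉ Qa.P›]
           obtain ⟨h, hc⟩ := certSys_of_inner hφ hψ hne hnadj hinner hxm hxn hxlm hxln hφN hp hφX hψX
           cases pB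
           · exact certB1A1 h true false hc
           · exact certB1A2 h true false hc)
        | (have hψX : ψ (gen Γ x) = gen Γ Qa.base ^ (0 : ℤ) * gen Γ x *
              gen Γ Qa.base ^ (-1 : ℤ) := by rw [hψX0, if_neg ‹pinv x ∉ Qa.P›, if_pos ‹x ∈ Qa.P›]
           obtain ⟨h, hc⟩ := certSys_of_inner hφ hψ hne hnadj hinner hxm hxn hxlm hxln hφN hp hφX hψX
           cases pB
           · exact certB1A1 h false true hc
           · exact certB1A2 h false true hc)
        | (have hψX : ψ (gen Γ x) = gen Γ Qa.base ^ (0 : ℤ) * gen Γ x *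
              gen Γ Qa.base ^ (0 : ℤ) := by rw [hψX0, if_neg ‹pinv x ∉ Qa.P›, if_neg ‹x ∉ Qa.P›]
           obtain ⟨h, hc⟩ := certSys_of_inner hφ hψ hne hnadj hinner hxm hxn hxlm hxln hφN hp hφX hψX
           cases pB
           · exact certB1A1 h false false hc
           · exact certB1A2 h false false hc)
      }
   case neg =>
    have hφN : φ (gen Γ Qa.base) = gen Γ Pa.base ^ (0 : ℤ) * gen Γ Qa.base *
        gen Γ Pa.base ^ (-1 : ℤ) := by rw [hφN0, if_neg hnp, if_pos hnt]
    obtain ⟨h, hc⟩ := certSys2_of_inner hφ hψ hne hnadj hinner hφN hp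
    exact cert2eq h false pB hc
  case neg =>
   by_cases hnp : pinv Qa.base ∈ Pa.P
   case pos =>
    have hφN : φ (gen Γ Qa.base) = gen Γ Pa.base ^ (1 : ℤ) * gen Γ Qa.base *
        gen Γ Pa.base ^ (0 : ℤ) := by rw [hφN0, if_pos hnp, if_neg hnt]
    obtain ⟨h, hc⟩ := certSys2_of_inner hφ hψ hne hnadj hinner hφN hp
    exact cert2eq h true pB hc
   case neg =>
    have hφN : φ (gen Γ Qa.base) = gen Γ Pa.base ^ (0 : ℤ) * gen Γ Qa.base *
        gen Γ Pa.base ^ (0 : ℤ) := by rw [hφN0, if_neg hnp, if_neg hnt]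
    obtain ⟨x, hxP, hxne⟩ := exists_other_P Pa
    have hxm : x.1 ≠ Pa.base.1 := by
      intro h
      rcases eq_or_pinv h with rfl | rfl
      · exact hxne rfl
      · exact Pa.hP.2.1 (by simpa [pinv] using hxP)
    have hxn : x.1 ≠ Qa.base.1 := by
      intro h
      rcases eq_or_pinv h with rfl | rfl
      · exact hnt hxP
      · exact hnp (by simpa [pinv] using hxP)
    have hxlm : x.1 ∉ lk Γ Pa.base.1 := not_lk_of_mem_P hxP
    have hxln : x.1 ∉ lk Γ Qa.base.1 := by
      intro hl
      have := side_adj_P (Pa := Pa) hxP (SimpleGraph.Adj.symm hl) hnmlk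
      exact hnt (mem_of_pair this Qa.base rfl)
    by_cases hpx : pinv x ∈ Pa.P
    · -- symmetric pattern (c,d) = (1,-1) : B0 scenario
      have hφX : φ (gen Γ x) = gen Γ Pa.base ^ (1 : ℤ) * gen Γ x *
          gen Γ Pa.base ^ (-1 : ℤ) := by
        rw [wh_gen_zpow Pa.hP hφ x hxm, if_pos hpx, if_pos hxP]
      have hψX0 := wh_gen_zpow Qa.hP hψ x hxn
      by_cases ha : pinv x ∈ Qa.P <;> by_cases hb : x ∈ Qa.P
      all_goals {
        first
        | (have hψX : ψ (gen Γ x) = gen Γ Qa.base ^ (1 : ℤ) * gen Γ x *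
              gen Γ Qa.base ^ (-1 : ℤ) := by rw [hψX0, if_pos ‹pinv x ∈ Qa.P›, if_pos ‹x ∈ Qa.P›]
           obtain ⟨h, hc⟩ := certSys_of_inner hφ hψ hne hnadj hinner hxm hxn hxlm hxln hφN hp hφX hψX
           cases pB
           · exact certB0A1 h true true hc
           · exact certB0A2 h true true hc)
        | (have hψX : ψ (gen Γ x) = gen Γ Qa.base ^ (1 : ℤ) * gen Γ x *
              gen Γ Qa.base ^ (0 : ℤ) := by rw [hψX0, if_pos ‹pinv x ∈ Qa.P›, if_neg ‹x ∉ Qa.P›]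
           obtain ⟨h, hc⟩ := certSys_of_inner hφ hψ hne hnadj hinner hxm hxn hxlm hxln hφN hp hφX hψX
           cases pB
           · exact certB0A1 h true false hc
           · exact certB0A2 h true false hc)
        | (have hψX : ψ (gen Γ x) = gen Γ Qa.base ^ (0 : ℤ) * gen Γ x *
              gen Γ Qa.base ^ (-1 : ℤ) := by rw [hψX0, if_neg ‹pinv x ∉ Qa.P›, if_pos ‹x ∈ Qa.P›]
           obtain ⟨h, hc⟩ := certSys_of_inner hφ hψ hne hnadj hinner hxm hxn hxlm hxln hφN hp hφX hψX
           cases pB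
           · exact certB0A1 h false true hc
           · exact certB0A2 h false true hc)
        | (have hψX : ψ (gen Γ x) = gen Γ Qa.base ^ (0 : ℤ) * gen Γ x *
              gen Γ Qa.base ^ (0 : ℤ) := by rw [hψX0, if_neg ‹pinv x ∉ Qa.P›, if_neg ‹x ∉ Qa.P›]
           obtain ⟨h, hc⟩ := certSys_of_inner hφ hψ hne hnadj hinner hxm hxn hxlm hxln hφN hp hφX hψX
           cases pB
           · exact certB0A1 h false false hc
           · exact certB0A2 h false false hc)
      }
    · -- asymmetric pattern (c,d) = (0,-1)
      have hφX : φ (gen Γ x) = gen Γ Pa.base ^ (0 : ℤ) * gen Γ x *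
          gen Γ Pa.base ^ (-1 : ℤ) := by
        rw [wh_gen_zpow Pa.hP hφ x hxm, if_neg hpx, if_pos hxP]
      have hψX0 := wh_gen_zpow Qa.hP hψ x hxn
      by_cases ha : pinv x ∈ Qa.P <;> by_cases hb : x ∈ Qa.P
      all_goals {
        first
        | (have hψX : ψ (gen Γ x) = gen Γ Qa.base ^ (1 : ℤ) * gen Γ x *
              gen Γ Qa.base ^ (-1 : ℤ) := by rw [hψX0, if_pos ‹pinv x ∈ Qa.P›, if_pos ‹x ∈ Qa.P›]
           obtain ⟨h, hc⟩ := certSys_of_inner hφ hψ hne hnadj hinner hxm hxn hxlm hxln hφN hp hφX hψX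
           exact certAsym h false pB false true true hc)
        | (have hψX : ψ (gen Γ x) = gen Γ Qa.base ^ (1 : ℤ) * gen Γ x *
              gen Γ Qa.base ^ (0 : ℤ) := by rw [hψX0, if_pos ‹pinv x ∈ Qa.P›, if_neg ‹x ∉ Qa.P›]
           obtain ⟨h, hc⟩ := certSys_of_inner hφ hψ hne hnadj hinner hxm hxn hxlm hxln hφN hp hφX hψX
           exact certAsym h false pB false true false hc)
        | (have hψX : ψ (gen Γ x) = gen Γ Qa.base ^ (0 : ℤ) * gen Γ x *
              gen Γ Qa.base ^ (-1 : ℤ) := by rw [hψX0, if_neg ‹pinv x ∉ Qa.P›, if_pos ‹x ∈ Qa.P›]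
           obtain ⟨h, hc⟩ := certSys_of_inner hφ hψ hne hnadj hinner hxm hxn hxlm hxln hφN hp hφX hψX
           exact certAsym h false pB false false true hc)
        | (have hψX : ψ (gen Γ x) = gen Γ Qa.base ^ (0 : ℤ) * gen Γ x *
              gen Γ Qa.base ^ (0 : ℤ) := by rw [hψX0, if_neg ‹pinv x ∉ Qa.P›, if_neg ‹x ∉ Qa.P›]
           obtain ⟨h, hc⟩ := certSys_of_inner hφ hψ hne hnadj hinner hxm hxn hxlm hxln hφN hp hφX hψX
           exact certAsym h false pB false false false hc)
      }

end Forward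

section ForwardMain

variable {Γ : SimpleGraph V} {Pa Qa : GWPartition Γ} {φ ψ : MulAut (RAAG Γ)}

theorem noSplit_of_inner
    (hφ : IsWhitehead Γ Pa.P Pa.base φ) (hψ : IsWhitehead Γ Qa.P Qa.base ψ)
    (hne : Pa.base.1 ≠ Qa.base.1) (hnadj : ¬ Γ.Adj Pa.base.1 Qa.base.1)
    (hinner : IsInner (φ * ψ * φ⁻¹ * ψ⁻¹)) : ¬ Splits Qa Pa.base.1 := by
  classical
  intro hs
  have hmnlk : Pa.base.1 ∉ lk Γ Qa.base.1 := fun h => hnadj h.symm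
  rcases splits_signed (Pa := Qa) (x := Pa.base) hmnlk hs with ⟨h1, h2⟩ | ⟨h1, h2⟩
  · refine noSplit_core hφ hψ hne hnadj hinner false ?_
    rw [wh_gen_zpow Qa.hP hψ Pa.base hne, if_neg h2, if_pos h1]
    simp
  · refine noSplit_core hφ hψ hne hnadj hinner true ?_
    rw [wh_gen_zpow Qa.hP hψ Pa.base hne, if_pos h1, if_neg h2]
    simp

theorem discI
    (hφ : IsWhitehead Γ Pa.P Pa.base φ) (hψ : IsWhitehead Γ Qa.P Qa.base ψ)
    (hne : Pa.base.1 ≠ Qa.base.1) (hnadj : ¬ Γ.Adj Pa.base.1 Qa.base.1)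
    (hinner : IsInner (φ * ψ * φ⁻¹ * ψ⁻¹))
    (hnPs : (Qa.base.1, true) ∈ Pa.Pstar ∧ (Qa.base.1, false) ∈ Pa.Pstar)
    (hmQs : (Pa.base.1, true) ∈ Qa.Pstar ∧ (Pa.base.1, false) ∈ Qa.Pstar) :
    Pa.P ∩ Qa.P = ∅ := by
  classical
  rw [Set.eq_empty_iff_forall_notMem]
  rintro x ⟨hxP, hxQ⟩
  have hxm : x.1 ≠ Pa.base.1 := by
    intro h
    rcases eq_or_pinv h with rfl | rfl
    · exact P_disj_Pstar (Pa := Qa) hxQ (mem_of_pair hmQs _ rfl)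
    · exact Pa.hP.2.1 (by simpa [pinv] using hxP)
  have hxn : x.1 ≠ Qa.base.1 := by
    intro h
    rcases eq_or_pinv h with rfl | rfl
    · exact P_disj_Pstar hxP (mem_of_pair hnPs _ rfl)
    · exact P_disj_Pstar hxP (mem_of_pair hnPs _ rfl)
  have hxlm : x.1 ∉ lk Γ Pa.base.1 := not_lk_of_mem_P hxP
  have hxln : x.1 ∉ lk Γ Qa.base.1 := not_lk_of_mem_P (Pa := Qa) hxQ
  have hn2 : pinv Qa.base ∉ Pa.P := fun h => P_disj_Pstar h (mem_of_pair hnPs (pinv Qa.base) rfl)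
  have hn1 : Qa.base ∉ Pa.P := fun h => P_disj_Pstar h (mem_of_pair hnPs Qa.base rfl)
  have hm2 : pinv Pa.base ∉ Qa.P := fun h => P_disj_Pstar (Pa := Qa) h (mem_of_pair hmQs (pinv Pa.base) rfl)
  have hm1 : Pa.base ∉ Qa.P := fun h => P_disj_Pstar (Pa := Qa) h (mem_of_pair hmQs Pa.base rfl)
  have hφN : φ (gen Γ Qa.base) = gen Γ Pa.base ^ (0 : ℤ) * gen Γ Qa.base *
      gen Γ Pa.base ^ (0 : ℤ) := by
    rw [wh_gen_zpow Pa.hP hφ Qa.base hne.symm, if_neg hn2, if_neg hn1]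
  have hψM : ψ (gen Γ Pa.base) = gen Γ Qa.base ^ (0 : ℤ) * gen Γ Pa.base *
      gen Γ Qa.base ^ (0 : ℤ) := by
    rw [wh_gen_zpow Qa.hP hψ Pa.base hne, if_neg hm2, if_neg hm1]
  have hφX0 := wh_gen_zpow Pa.hP hφ x hxm
  have hψX0 := wh_gen_zpow Qa.hP hψ x hxn
  by_cases hc : pinv x ∈ Pa.P <;> by_cases ha : pinv x ∈ Qa.P
  all_goals {
    first
    | (have hφX : φ (gen Γ x) = gen Γ Pa.base ^ (1 : ℤ) * gen Γ x *
          gen Γ Pa.base ^ (-1 : ℤ) := by rw [hφX0, if_pos ‹pinv x ∈ Pa.P›, if_pos hxP]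
       have hψX : ψ (gen Γ x) = gen Γ Qa.base ^ (1 : ℤ) * gen Γ x *
          gen Γ Qa.base ^ (-1 : ℤ) := by rw [hψX0, if_pos ‹pinv x ∈ Qa.P›, if_pos hxQ]
       obtain ⟨h, hcert⟩ := certSys_of_inner hφ hψ hne hnadj hinner hxm hxn hxlm hxln hφN hψM hφX hψX
       exact certG2I h true true hcert)
    | (have hφX : φ (gen Γ x) = gen Γ Pa.base ^ (1 : ℤ) * gen Γ x *
          gen Γ Pa.base ^ (-1 : ℤ) := by rw [hφX0, if_pos ‹pinv x ∈ Pa.P›, if_pos hxP]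
       have hψX : ψ (gen Γ x) = gen Γ Qa.base ^ (0 : ℤ) * gen Γ x *
          gen Γ Qa.base ^ (-1 : ℤ) := by rw [hψX0, if_neg ‹pinv x ∉ Qa.P›, if_pos hxQ]
       obtain ⟨h, hcert⟩ := certSys_of_inner hφ hψ hne hnadj hinner hxm hxn hxlm hxln hφN hψM hφX hψX
       exact certG2I h true false hcert)
    | (have hφX : φ (gen Γ x) = gen Γ Pa.base ^ (0 : ℤ) * gen Γ x *
          gen Γ Pa.base ^ (-1 : ℤ) := by rw [hφX0, if_neg ‹pinv x ∉ Pa.P›, if_pos hxP]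
       have hψX : ψ (gen Γ x) = gen Γ Qa.base ^ (1 : ℤ) * gen Γ x *
          gen Γ Qa.base ^ (-1 : ℤ) := by rw [hψX0, if_pos ‹pinv x ∈ Qa.P›, if_pos hxQ]
       obtain ⟨h, hcert⟩ := certSys_of_inner hφ hψ hne hnadj hinner hxm hxn hxlm hxln hφN hψM hφX hψX
       exact certG2I h false true hcert)
    | (have hφX : φ (gen Γ x) = gen Γ Pa.base ^ (0 : ℤ) * gen Γ x *
          gen Γ Pa.base ^ (-1 : ℤ) := by rw [hφX0, if_neg ‹pinv x ∉ Pa.P›, if_pos hxP]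
       have hψX : ψ (gen Γ x) = gen Γ Qa.base ^ (0 : ℤ) * gen Γ x *
          gen Γ Qa.base ^ (-1 : ℤ) := by rw [hψX0, if_neg ‹pinv x ∉ Qa.P›, if_pos hxQ]
       obtain ⟨h, hcert⟩ := certSys_of_inner hφ hψ hne hnadj hinner hxm hxn hxlm hxln hφN hψM hφX hψX
       exact certG2I h false false hcert)
  }

theorem discII
    (hφ : IsWhitehead Γ Pa.P Pa.base φ) (hψ : IsWhitehead Γ Qa.P Qa.base ψ)
    (hne : Pa.base.1 ≠ Qa.base.1) (hnadj : ¬ Γ.Adj Pa.base.1 Qa.base.1)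
    (hinner : IsInner (φ * ψ * φ⁻¹ * ψ⁻¹))
    (hnPs : (Qa.base.1, true) ∈ Pa.Pstar ∧ (Qa.base.1, false) ∈ Pa.Pstar)
    (hmQ : (Pa.base.1, true) ∈ Qa.P ∧ (Pa.base.1, false) ∈ Qa.P) :
    Pa.P ∩ Qa.Pstar = ∅ := by
  classical
  rw [Set.eq_empty_iff_forall_notMem]
  rintro x ⟨hxP, hxQs⟩
  have hxm : x.1 ≠ Pa.base.1 := by
    intro h
    rcases eq_or_pinv h with rfl | rfl
    · exact P_disj_Pstar (Pa := Qa) (mem_of_pair hmQ Pa.base rfl) hxQs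
    · exact Pa.hP.2.1 (by simpa [pinv] using hxP)
  have hxn : x.1 ≠ Qa.base.1 := by
    intro h
    rcases eq_or_pinv h with rfl | rfl
    · exact P_disj_Pstar hxP (mem_of_pair hnPs Qa.base rfl)
    · exact P_disj_Pstar hxP (mem_of_pair hnPs _ rfl)
  have hxlm : x.1 ∉ lk Γ Pa.base.1 := not_lk_of_mem_P hxP
  have hxln : x.1 ∉ lk Γ Qa.base.1 := (mem_pstar_iff.mp hxQs).1
  have hn2 : pinv Qa.base ∉ Pa.P := fun h => P_disj_Pstar h (mem_of_pair hnPs (pinv Qa.base) rfl)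
  have hn1 : Qa.base ∉ Pa.P := fun h => P_disj_Pstar h (mem_of_pair hnPs Qa.base rfl)
  have hbQ : x ∉ Qa.P := fun h => P_disj_Pstar (Pa := Qa) h hxQs
  have hφN : φ (gen Γ Qa.base) = gen Γ Pa.base ^ (0 : ℤ) * gen Γ Qa.base *
      gen Γ Pa.base ^ (0 : ℤ) := by
    rw [wh_gen_zpow Pa.hP hφ Qa.base hne.symm, if_neg hn2, if_neg hn1]
  have hψM : ψ (gen Γ Pa.base) = gen Γ Qa.base ^ (1 : ℤ) * gen Γ Pa.base *
      gen Γ Qa.base ^ (-1 : ℤ) := by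
    rw [wh_gen_zpow Qa.hP hψ Pa.base hne, if_pos (mem_of_pair hmQ (pinv Pa.base) rfl),
      if_pos (mem_of_pair hmQ Pa.base rfl)]
  have hφX0 := wh_gen_zpow Pa.hP hφ x hxm
  have hψX0 := wh_gen_zpow Qa.hP hψ x hxn
  by_cases hc : pinv x ∈ Pa.P <;> by_cases ha : pinv x ∈ Qa.P
  all_goals {
    first
    | (have hφX : φ (gen Γ x) = gen Γ Pa.base ^ (1 : ℤ) * gen Γ x *
          gen Γ Pa.base ^ (-1 : ℤ) := by rw [hφX0, if_pos ‹pinv x ∈ Pa.P›, if_pos hxP]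
       have hψX : ψ (gen Γ x) = gen Γ Qa.base ^ (1 : ℤ) * gen Γ x *
          gen Γ Qa.base ^ (0 : ℤ) := by rw [hψX0, if_pos ‹pinv x ∈ Qa.P›, if_neg hbQ]
       obtain ⟨h, hcert⟩ := certSys_of_inner hφ hψ hne hnadj hinner hxm hxn hxlm hxln hφN hψM hφX hψX
       exact certG2II h true true hcert)
    | (have hφX : φ (gen Γ x) = gen Γ Pa.base ^ (1 : ℤ) * gen Γ x *
          gen Γ Pa.base ^ (-1 : ℤ) := by rw [hφX0, if_pos ‹pinv x ∈ Pa.P›, if_pos hxP]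
       have hψX : ψ (gen Γ x) = gen Γ Qa.base ^ (0 : ℤ) * gen Γ x *
          gen Γ Qa.base ^ (0 : ℤ) := by rw [hψX0, if_neg ‹pinv x ∉ Qa.P›, if_neg hbQ]
       obtain ⟨h, hcert⟩ := certSys_of_inner hφ hψ hne hnadj hinner hxm hxn hxlm hxln hφN hψM hφX hψX
       exact certG2II h true false hcert)
    | (have hφX : φ (gen Γ x) = gen Γ Pa.base ^ (0 : ℤ) * gen Γ x *
          gen Γ Pa.base ^ (-1 : ℤ) := by rw [hφX0, if_neg ‹pinv x ∉ Pa.P›, if_pos hxP]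
       have hψX : ψ (gen Γ x) = gen Γ Qa.base ^ (1 : ℤ) * gen Γ x *
          gen Γ Qa.base ^ (0 : ℤ) := by rw [hψX0, if_pos ‹pinv x ∈ Qa.P›, if_neg hbQ]
       obtain ⟨h, hcert⟩ := certSys_of_inner hφ hψ hne hnadj hinner hxm hxn hxlm hxln hφN hψM hφX hψX
       exact certG2II h false true hcert)
    | (have hφX : φ (gen Γ x) = gen Γ Pa.base ^ (0 : ℤ) * gen Γ x *
          gen Γ Pa.base ^ (-1 : ℤ) := by rw [hφX0, if_neg ‹pinv x ∉ Pa.P›, if_pos hxP]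
       have hψX : ψ (gen Γ x) = gen Γ Qa.base ^ (0 : ℤ) * gen Γ x *
          gen Γ Qa.base ^ (0 : ℤ) := by rw [hψX0, if_neg ‹pinv x ∉ Qa.P›, if_neg hbQ]
       obtain ⟨h, hcert⟩ := certSys_of_inner hφ hψ hne hnadj hinner hxm hxn hxlm hxln hφN hψM hφX hψX
       exact certG2II h false false hcert)
  }


theorem discIV
    (hφ : IsWhitehead Γ Pa.P Pa.base φ) (hψ : IsWhitehead Γ Qa.P Qa.base ψ)
    (hne : Pa.base.1 ≠ Qa.base.1) (hnadj : ¬ Γ.Adj Pa.base.1 Qa.base.1)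
    (hinner : IsInner (φ * ψ * φ⁻¹ * ψ⁻¹))
    (hnP : (Qa.base.1, true) ∈ Pa.P ∧ (Qa.base.1, false) ∈ Pa.P)
    (hmQ : (Pa.base.1, true) ∈ Qa.P ∧ (Pa.base.1, false) ∈ Qa.P) :
    Pa.Pstar ∩ Qa.Pstar = ∅ := by
  classical
  rw [Set.eq_empty_iff_forall_notMem]
  rintro x ⟨hxPs, hxQs⟩
  have hxm : x.1 ≠ Pa.base.1 := by
    intro h
    rcases eq_or_pinv h with rfl | rfl
    · exact P_disj_Pstar (base_mem_P Pa) hxPs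
    · exact P_disj_Pstar (Pa := Qa) (mem_of_pair hmQ (pinv Pa.base) rfl) hxQs
  have hxn : x.1 ≠ Qa.base.1 := by
    intro h
    rcases eq_or_pinv h with rfl | rfl
    · exact P_disj_Pstar (mem_of_pair hnP Qa.base rfl) hxPs
    · exact P_disj_Pstar (mem_of_pair hnP (pinv Qa.base) rfl) hxPs
  have hxlm : x.1 ∉ lk Γ Pa.base.1 := (mem_pstar_iff.mp hxPs).1
  have hxln : x.1 ∉ lk Γ Qa.base.1 := (mem_pstar_iff.mp hxQs).1
  have hbP : x ∉ Pa.P := fun h => P_disj_Pstar h hxPs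
  have hbQ : x ∉ Qa.P := fun h => P_disj_Pstar (Pa := Qa) h hxQs
  have hφN : φ (gen Γ Qa.base) = gen Γ Pa.base ^ (1 : ℤ) * gen Γ Qa.base *
      gen Γ Pa.base ^ (-1 : ℤ) := by
    rw [wh_gen_zpow Pa.hP hφ Qa.base hne.symm, if_pos (mem_of_pair hnP (pinv Qa.base) rfl),
      if_pos (mem_of_pair hnP Qa.base rfl)]
  have hψM : ψ (gen Γ Pa.base) = gen Γ Qa.base ^ (1 : ℤ) * gen Γ Pa.base *
      gen Γ Qa.base ^ (-1 : ℤ) := by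
    rw [wh_gen_zpow Qa.hP hψ Pa.base hne, if_pos (mem_of_pair hmQ (pinv Pa.base) rfl),
      if_pos (mem_of_pair hmQ Pa.base rfl)]
  have hφX0 := wh_gen_zpow Pa.hP hφ x hxm
  have hψX0 := wh_gen_zpow Qa.hP hψ x hxn
  by_cases hc : pinv x ∈ Pa.P <;> by_cases ha : pinv x ∈ Qa.P
  all_goals {
    first
    | (have hφX : φ (gen Γ x) = gen Γ Pa.base ^ (1 : ℤ) * gen Γ x *
          gen Γ Pa.base ^ (0 : ℤ) := by rw [hφX0, if_pos ‹pinv x ∈ Pa.P›, if_neg hbP]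
       have hψX : ψ (gen Γ x) = gen Γ Qa.base ^ (1 : ℤ) * gen Γ x *
          gen Γ Qa.base ^ (0 : ℤ) := by rw [hψX0, if_pos ‹pinv x ∈ Qa.P›, if_neg hbQ]
       obtain ⟨h, hcert⟩ := certSys_of_inner hφ hψ hne hnadj hinner hxm hxn hxlm hxln hφN hψM hφX hψX
       exact certG2IV h true true hcert)
    | (have hφX : φ (gen Γ x) = gen Γ Pa.base ^ (1 : ℤ) * gen Γ x *
          gen Γ Pa.base ^ (0 : ℤ) := by rw [hφX0, if_pos ‹pinv x ∈ Pa.P›, if_neg hbP]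
       have hψX : ψ (gen Γ x) = gen Γ Qa.base ^ (0 : ℤ) * gen Γ x *
          gen Γ Qa.base ^ (0 : ℤ) := by rw [hψX0, if_neg ‹pinv x ∉ Qa.P›, if_neg hbQ]
       obtain ⟨h, hcert⟩ := certSys_of_inner hφ hψ hne hnadj hinner hxm hxn hxlm hxln hφN hψM hφX hψX
       exact certG2IV h true false hcert)
    | (have hφX : φ (gen Γ x) = gen Γ Pa.base ^ (0 : ℤ) * gen Γ x *
          gen Γ Pa.base ^ (0 : ℤ) := by rw [hφX0, if_neg ‹pinv x ∉ Pa.P›, if_neg hbP]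
       have hψX : ψ (gen Γ x) = gen Γ Qa.base ^ (1 : ℤ) * gen Γ x *
          gen Γ Qa.base ^ (0 : ℤ) := by rw [hψX0, if_pos ‹pinv x ∈ Qa.P›, if_neg hbQ]
       obtain ⟨h, hcert⟩ := certSys_of_inner hφ hψ hne hnadj hinner hxm hxn hxlm hxln hφN hψM hφX hψX
       exact certG2IV h false true hcert)
    | (have hφX : φ (gen Γ x) = gen Γ Pa.base ^ (0 : ℤ) * gen Γ x *
          gen Γ Pa.base ^ (0 : ℤ) := by rw [hφX0, if_neg ‹pinv x ∉ Pa.P›, if_neg hbP]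
       have hψX : ψ (gen Γ x) = gen Γ Qa.base ^ (0 : ℤ) * gen Γ x *
          gen Γ Qa.base ^ (0 : ℤ) := by rw [hψX0, if_neg ‹pinv x ∉ Qa.P›, if_neg hbQ]
       obtain ⟨h, hcert⟩ := certSys_of_inner hφ hψ hne hnadj hinner hxm hxn hxlm hxln hφN hψM hφX hψX
       exact certG2IV h false false hcert)
  }

end ForwardMain

/-- Let `φ(P,m)` and `φ(Q,n)` be Whitehead automorphisms with associated
`ΓW`-partitions `Pa` based at `m` and `Qa` based at `n`.  If the generators `m` and
`n` commute in `A_Γ` (their underlying vertices are equal or adjacent), then the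
automorphisms commute.  If not, then they commute as outer automorphisms iff `Pa`
and `Qa` are compatible, `Qa` does not split the vertex of `m` and `Pa` does not
split the vertex of `n`. -/
theorem stmt2 {V : Type*} [Fintype V] (Γ : SimpleGraph V)
    (Pa Qa : GWPartition Γ) (φ ψ : MulAut (RAAG Γ))
    (hφ : IsWhitehead Γ Pa.P Pa.base φ) (hψ : IsWhitehead Γ Qa.P Qa.base ψ) :
    ((Pa.base.1 = Qa.base.1 ∨ Γ.Adj Pa.base.1 Qa.base.1) → φ * ψ = ψ * φ) ∧
    (¬ (Pa.base.1 = Qa.base.1 ∨ Γ.Adj Pa.base.1 Qa.base.1) →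
      (CommuteOuter φ ψ ↔
        (Compatible Pa Qa ∧ ¬ Splits Qa Pa.base.1 ∧ ¬ Splits Pa Qa.base.1))) := by
  classical
  constructor
  · exact fun hc => part1 hφ hψ hc
  · intro hnc
    push_neg at hnc
    obtain ⟨hne, hnadj⟩ := hnc
    have hnmlk : Qa.base.1 ∉ lk Γ Pa.base.1 := hnadj
    have hmnlk : Pa.base.1 ∉ lk Γ Qa.base.1 := fun h => hnadj h.symm
    constructor
    · intro hco
      have hinner : IsInner (φ * ψ * φ⁻¹ * ψ⁻¹) := hco
      have hnsQ := noSplit_of_inner hφ hψ hne hnadj hinner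
      have hnsP := noSplit_of_inner (Pa := Qa) (Qa := Pa) hψ hφ (Ne.symm hne)
        (fun h => hnadj h.symm) (isInner_swap hinner)
      refine ⟨?_, hnsQ, hnsP⟩
      have hn := unsplit_sides (Pa := Pa) hnmlk hnsP
      have hm := unsplit_sides (Pa := Qa) hmnlk hnsQ
      rcases hn with hn | hn <;> rcases hm with hm | hm
      · exact Or.inl (Or.inr (Or.inr (Or.inr (discIV hφ hψ hne hnadj hinner hn hm))))
      · have := discII (Pa := Qa) (Qa := Pa) hψ hφ (Ne.symm hne) (fun h => hnadj h.symm)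
          (isInner_swap hinner) hm hn
        exact Or.inl (Or.inr (Or.inr (Or.inl (by rw [Set.inter_comm]; exact this))))
      · exact Or.inl (Or.inr (Or.inl (discII hφ hψ hne hnadj hinner hn hm)))
      · exact Or.inl (Or.inl (discI hφ hψ hne hnadj hinner hn hm))
    · rintro ⟨hcompat, hnsQ, hnsP⟩
      have hn := unsplit_sides (Pa := Pa) hnmlk hnsP
      have hm := unsplit_sides (Pa := Qa) hmnlk hnsQ
      rcases hcompat with (h | h | h | h) | ⟨hadj, -⟩
      · -- P ∩ Q = ∅
        have hd : ∀ x : Vpm V, x ∈ Pa.P → x ∉ Qa.P :=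
          fun x h1 h2 => (Set.eq_empty_iff_forall_notMem.mp h x) ⟨h1, h2⟩
        have hn' : (Qa.base.1, true) ∈ Pa.Pstar ∧ (Qa.base.1, false) ∈ Pa.Pstar := by
          rcases hn with hn | hn
          · exact absurd (base_mem_P Qa) (hd Qa.base (mem_of_pair hn Qa.base rfl))
          · exact hn
        have hm' : (Pa.base.1, true) ∈ Qa.Pstar ∧ (Pa.base.1, false) ∈ Qa.Pstar := by
          rcases hm with hm | hm
          · exact absurd (mem_of_pair hm Pa.base rfl) (hd Pa.base (base_mem_P Pa))
          · exact hm
        have fixφ : φ (gen Γ Qa.base) = gen Γ Qa.base := by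
          rw [wh_gen Pa.hP hφ]
          have e1 : Qa.base ∉ Pa.P := fun hh => P_disj_Pstar hh (mem_of_pair hn' Qa.base rfl)
          have e2 : pinv Qa.base ∉ Pa.P :=
            fun hh => P_disj_Pstar hh (mem_of_pair hn' (pinv Qa.base) rfl)
          simp [e1, e2]
        have fixψ : ψ (gen Γ Pa.base) = gen Γ Pa.base := by
          rw [wh_gen Qa.hP hψ]
          have e1 : Pa.base ∉ Qa.P :=
            fun hh => P_disj_Pstar (Pa := Qa) hh (mem_of_pair hm' Pa.base rfl)
          have e2 : pinv Pa.base ∉ Qa.P :=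
            fun hh => P_disj_Pstar (Pa := Qa) hh (mem_of_pair hm' (pinv Pa.base) rfl)
          simp [e1, e2]
        exact isInner_of_comm (cfgI hφ hψ fixφ fixψ hd)
      · -- P ∩ Q* = ∅
        have hd : ∀ x : Vpm V, x ∈ Pa.P → x ∉ Qa.Pstar :=
          fun x h1 h2 => (Set.eq_empty_iff_forall_notMem.mp h x) ⟨h1, h2⟩
        have hn' : (Qa.base.1, true) ∈ Pa.Pstar ∧ (Qa.base.1, false) ∈ Pa.Pstar := by
          rcases hn with hn | hn
          · exact absurd (base_pinv_mem_Pstar Qa)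
              (hd (pinv Qa.base) (mem_of_pair hn (pinv Qa.base) rfl))
          · exact hn
        have hm' : (Pa.base.1, true) ∈ Qa.P ∧ (Pa.base.1, false) ∈ Qa.P := by
          rcases hm with hm | hm
          · exact hm
          · exact absurd (mem_of_pair hm Pa.base rfl) (hd Pa.base (base_mem_P Pa))
        exact isInner_of_comm (cfgII hφ hψ hnadj hne hn' hm' hd)
      · -- P* ∩ Q = ∅
        have hd : ∀ x : Vpm V, x ∈ Qa.P → x ∉ Pa.Pstar :=
          fun x h1 h2 => (Set.eq_empty_iff_forall_notMem.mp h x) ⟨h2, h1⟩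
        have hm' : (Pa.base.1, true) ∈ Qa.Pstar ∧ (Pa.base.1, false) ∈ Qa.Pstar := by
          rcases hm with hm | hm
          · exact absurd (base_pinv_mem_Pstar Pa)
              (fun hh => (Set.eq_empty_iff_forall_notMem.mp h (pinv Pa.base))
                ⟨hh, mem_of_pair hm (pinv Pa.base) rfl⟩)
          · exact hm
        have hn' : (Qa.base.1, true) ∈ Pa.P ∧ (Qa.base.1, false) ∈ Pa.P := by
          rcases hn with hn | hn
          · exact hn
          · exact absurd (mem_of_pair hn Qa.base rfl) (hd Qa.base (base_mem_P Qa))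
        have := cfgII (Pa := Qa) (Qa := Pa) hψ hφ (fun hh => hnadj hh.symm) (Ne.symm hne)
          hm' hn' hd
        exact isInner_of_comm this.symm
      · -- P* ∩ Q* = ∅
        have hd : ∀ x : Vpm V, x ∈ Pa.Pstar → x ∉ Qa.Pstar :=
          fun x h1 h2 => (Set.eq_empty_iff_forall_notMem.mp h x) ⟨h1, h2⟩
        have hn' : (Qa.base.1, true) ∈ Pa.P ∧ (Qa.base.1, false) ∈ Pa.P := by
          rcases hn with hn | hn
          · exact hn
          · exact absurd (base_pinv_mem_Pstar Qa)
              (hd (pinv Qa.base) (mem_of_pair hn (pinv Qa.base) rfl))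
        have hm' : (Pa.base.1, true) ∈ Qa.P ∧ (Pa.base.1, false) ∈ Qa.P := by
          rcases hm with hm | hm
          · exact hm
          · exact absurd (base_pinv_mem_Pstar Pa)
              (fun hh => hd (pinv Pa.base) hh (mem_of_pair hm (pinv Pa.base) rfl))
        exact conj_comm_of_eq (cfgIV hφ hψ hnadj hne hn' hm' hd)
      · exact absurd hadj hnadj

end GW
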